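/- Let I ≥ 2 and H ≥ 2. Consider three-way I×I×H tables of nonnegative integers, and call two such tables u, v equivalent if: (i) Σ_{i,j} u(i,j,h) = Σ_{i,j} v(i,j,h) for every layer h; and (ii) the layer-summed tables U(i,j) = Σ_h u(i,j,h) and V(i,j) = Σ_h v(i,j,h) have equal row sums, equal column sums, and equal diagonal entries U(i,i) = V(i,i). Let ℳ_0 = 𝓑_1 ∪ 𝓑_2, where 𝓑_1 consists of all tables obtained from a df 1 loop m of degree 2 or 3 with support off the main diagonal by distributing its nonzero entries over the layers in such a way that each row of m is placed entirely in one layer, and 𝓑_2 consists of all tables b that are zero except for b(i_1,j_1,h_1)=1, b(i_2,j_2,h_1)=−1, b(i_1,j_1,h_2)=−1, b(i_2,j_2,h_2)=1 for cells (i_1,j_1) ≠ (i_2,j_2) and layers h_1 ≠ h_2, together with the negatives of all these tables. Then any two equivalent tables u, v are connected by a finite sequence u = f_0, f_1, …, f_L = v in which every f_s is a nonnegative integer table and every difference f_{s+1} − f_s belongs to ℳ_0; that is, ℳ_0 is a Markov basis for the model M_0 built on the quasi-independence model. -/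

import Mathlib

/-- `m` is a loop of degree `r` on the `I × I` table: there are pairwise distinct row
indices `a 0, …, a (r-1)` and pairwise distinct column indices `b 0, …, b (r-1)` with
`m (a s, b s) = 1`, `m (a s, b (s+1)) = -1` (indices mod `r`), and all other entries `0`. -/
def IsLoopOn (I r : ℕ) (m : Fin I × Fin I → ℤ) : Prop :=
  2 ≤ r ∧ ∃ a b : Fin r → Fin I, Function.Injective a ∧ Function.Injective b ∧
    (∀ s, m (a s, b s) = 1) ∧
    (∀ s, m (a s, b (finRotate r s)) = -1) ∧
    (∀ p : Fin I × Fin I,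
      (∀ s, ¬(a s = p.1 ∧ b s = p.2) ∧ ¬(a s = p.1 ∧ b (finRotate r s) = p.2)) → m p = 0)

/-- A loop is df 1 if its support does not contain the support of any other loop. -/
def IsDf1Loop (I : ℕ) (m : Fin I × Fin I → ℤ) : Prop :=
  (∃ r, IsLoopOn I r m) ∧
  ∀ m' : Fin I × Fin I → ℤ, (∃ r', IsLoopOn I r' m') →
    {p | m' p ≠ 0} ⊆ {p | m p ≠ 0} → m' = m ∨ m' = -m

/-- Moves of type 1 for the model `M_0`: a df 1 loop `m` of degree 2 or 3 with support off
the main diagonal, split over the layers so that each row of `m` lies entirely in one layer. -/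
def B1qi (I H : ℕ) : Set (Fin I × Fin I × Fin H → ℤ) :=
  {b | ∃ (m : Fin I × Fin I → ℤ) (ℓ : Fin I → Fin H),
    IsDf1Loop I m ∧ (IsLoopOn I 2 m ∨ IsLoopOn I 3 m) ∧
    (∀ i, m (i, i) = 0) ∧
    b = fun p => if p.2.2 = ℓ p.1 then m (p.1, p.2.1) else 0}

/-- A basic move of type 2: `+1` at `(c₁,h₁)` and `(c₂,h₂)`, `-1` at `(c₂,h₁)` and `(c₁,h₂)`. -/
def Bmove (I H : ℕ) (c₁ c₂ : Fin I × Fin I) (h₁ h₂ : Fin H) :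
    Fin I × Fin I × Fin H → ℤ := fun p =>
  (if p = (c₁.1, c₁.2, h₁) then 1 else 0) + (if p = (c₂.1, c₂.2, h₁) then -1 else 0) +
    (if p = (c₁.1, c₁.2, h₂) then -1 else 0) + (if p = (c₂.1, c₂.2, h₂) then 1 else 0)

/-- Moves of type 2 for the model `M_0`, together with their negatives. -/
def B2 (I H : ℕ) : Set (Fin I × Fin I × Fin H → ℤ) :=
  {b | ∃ (c₁ c₂ : Fin I × Fin I) (h₁ h₂ : Fin H), c₁ ≠ c₂ ∧ h₁ ≠ h₂ ∧
    (b = Bmove I H c₁ c₂ h₁ h₂ ∨ b = -(Bmove I H c₁ c₂ h₁ h₂))}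

/-- `f` and `g` are connected through nonnegative tables by steps in `M`. -/
def MarkovConnects {α : Type*} (M : Set (α → ℤ)) (f g : α → ℤ) : Prop :=
  ∃ (L : ℕ) (path : Fin (L + 1) → α → ℤ),
    path 0 = f ∧ path (Fin.last L) = g ∧
    (∀ s p, 0 ≤ path s p) ∧
    ∀ s : Fin L, path s.succ - path s.castSucc ∈ M

section infra
variable {α : Type*} {M : Set (α → ℤ)} {f g w : α → ℤ}

def StepRel (M : Set (α → ℤ)) (f g : α → ℤ) : Prop :=
  (∀ p, 0 ≤ f p) ∧ (∀ p, 0 ≤ g p) ∧ g - f ∈ M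

def Steps (M : Set (α → ℤ)) : (α → ℤ) → (α → ℤ) → Prop :=
  Relation.ReflTransGen (StepRel M)

theorem mc_refl (hf : ∀ p, 0 ≤ f p) : MarkovConnects M f f := by
  refine ⟨0, fun _ => f, rfl, rfl, fun _ => hf, fun s => s.elim0⟩

theorem mc_step_right (h : MarkovConnects M f g) (hw : ∀ p, 0 ≤ w p)
    (hmem : w - g ∈ M) : MarkovConnects M f w := by
  obtain ⟨L, path, h0, hL, hpos, hstep⟩ := h
  refine ⟨L + 1, Fin.snoc path w, ?_, ?_, ?_, ?_⟩
  · rw [show (0 : Fin (L+2)) = Fin.castSucc 0 by rfl, Fin.snoc_castSucc, h0]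
  · simp [Fin.snoc_last]
  · intro s p
    rcases Fin.eq_castSucc_or_eq_last s with ⟨j, rfl⟩ | rfl
    · rw [Fin.snoc_castSucc]; exact hpos j p
    · rw [Fin.snoc_last]; exact hw p
  · intro s
    rcases Fin.eq_castSucc_or_eq_last s with ⟨j, rfl⟩ | rfl
    · rw [Fin.succ_castSucc, Fin.snoc_castSucc, Fin.snoc_castSucc]
      exact hstep j
    · have h1 : (Fin.last L).succ = Fin.last (L+1) := rfl
      have h2 : (Fin.last L).castSucc = Fin.castSucc (Fin.last L) := rfl
      rw [h1, Fin.snoc_last, h2, Fin.snoc_castSucc, hL]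
      exact hmem

theorem steps_to_mc (hf : ∀ p, 0 ≤ f p) (h : Steps M f g) : MarkovConnects M f g := by
  induction h with
  | refl => exact mc_refl hf
  | tail _ hstep ih => exact mc_step_right ih hstep.2.1 hstep.2.2

theorem steps_single (h : StepRel M f g) : Steps M f g :=
  Relation.ReflTransGen.single h

theorem steps_trans {h' : α → ℤ} (h1 : Steps M f g) (h2 : Steps M g h') : Steps M f h' :=
  Relation.ReflTransGen.trans h1 h2

end infra


/-! loops -/

def eQI {I : ℕ} (a b : Fin I) : Fin I × Fin I → ℤ := fun p => if p = (a, b) then 1 else 0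

def loop2 {I : ℕ} (i1 i2 j1 j2 : Fin I) : Fin I × Fin I → ℤ :=
  eQI i1 j2 + eQI i2 j1 - eQI i1 j1 - eQI i2 j2

def loop3 {I : ℕ} (i1 i2 i3 j1 j2 j3 : Fin I) : Fin I × Fin I → ℤ :=
  eQI i1 j2 + eQI i2 j3 + eQI i3 j1 - eQI i1 j1 - eQI i2 j2 - eQI i3 j3

theorem finRotate_ne_self {r : ℕ} (hr : 2 ≤ r) (s : Fin r) : finRotate r s ≠ s := by
  obtain ⟨k, rfl⟩ : ∃ k, r = k + 2 := ⟨r - 2, by omega⟩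
  rw [finRotate_succ_apply]
  intro h
  have h1 : s + 1 = s + 0 := by simpa using h
  exact one_ne_zero (add_left_cancel h1)

theorem rot2_0 : finRotate 2 0 = 1 := by decide
theorem rot2_1 : finRotate 2 1 = 0 := by decide
theorem rot3_0 : finRotate 3 0 = 1 := by decide
theorem rot3_1 : finRotate 3 1 = 2 := by decide
theorem rot3_2 : finRotate 3 2 = 0 := by decide

theorem loop_eq_sum {I r : ℕ} (hr : 2 ≤ r) (m : Fin I × Fin I → ℤ) (a b : Fin r → Fin I)
    (ha : Function.Injective a) (hb : Function.Injective b)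
    (h1 : ∀ s, m (a s, b s) = 1)
    (h2 : ∀ s, m (a s, b (finRotate r s)) = -1)
    (h3 : ∀ p : Fin I × Fin I,
      (∀ s, ¬(a s = p.1 ∧ b s = p.2) ∧ ¬(a s = p.1 ∧ b (finRotate r s) = p.2)) → m p = 0) :
    m = (∑ s, eQI (a s) (b s)) - ∑ s, eQI (a s) (b (finRotate r s)) := by
  funext p
  rw [Pi.sub_apply, Finset.sum_apply, Finset.sum_apply]
  by_cases hA : ∃ s, (a s, b s) = p
  · obtain ⟨s0, hs0⟩ := hA
    have hfirst : (∑ s, eQI (a s) (b s) p) = 1 := by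
      rw [Finset.sum_eq_single_of_mem s0 (Finset.mem_univ _)]
      · simp [eQI, hs0]
      · intro t _ ht
        simp only [eQI]
        rw [if_neg]
        intro hp
        rw [← hs0] at hp
        exact ht (ha (congrArg Prod.fst hp)).symm
    have hsecond : (∑ s, eQI (a s) (b (finRotate r s)) p) = 0 := by
      refine Finset.sum_eq_zero fun t _ => ?_
      simp only [eQI]
      rw [if_neg]
      intro hp
      rw [← hs0] at hp
      have hat : t = s0 := ha (congrArg Prod.fst hp.symm)
      subst hat
      have hbt : finRotate r t = t := hb (congrArg Prod.snd hp.symm)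
      exact finRotate_ne_self hr t hbt
    rw [hfirst, hsecond, ← hs0, h1 s0]; ring
  · by_cases hB : ∃ s, (a s, b (finRotate r s)) = p
    · obtain ⟨s0, hs0⟩ := hB
      have hfirst : (∑ s, eQI (a s) (b s) p) = 0 := by
        refine Finset.sum_eq_zero fun t _ => ?_
        simp only [eQI]
        rw [if_neg]
        intro hp
        rw [← hs0] at hp
        have hat : t = s0 := ha (congrArg Prod.fst hp.symm)
        subst hat
        have hbt : t = finRotate r t := hb (congrArg Prod.snd hp.symm)
        exact finRotate_ne_self hr t hbt.symm
      have hsecond : (∑ s, eQI (a s) (b (finRotate r s)) p) = 1 := by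
        rw [Finset.sum_eq_single_of_mem s0 (Finset.mem_univ _)]
        · subst hs0; simp [eQI]
        · intro t _ ht
          simp only [eQI]
          rw [if_neg]
          intro hp
          rw [← hs0] at hp
          exact ht (ha (congrArg Prod.fst hp)).symm
      rw [hfirst, hsecond, ← hs0, h2 s0]; ring
    · push_neg at hA hB
      have hz : m p = 0 := by
        refine h3 p fun s => ⟨?_, ?_⟩
        · rintro ⟨h1', h2'⟩; exact hA s (by rw [h1', h2'])
        · rintro ⟨h1', h2'⟩; exact hB s (by rw [h1', h2'])
      rw [hz]
      have z1 : (∑ s, eQI (a s) (b s) p) = 0 :=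
        Finset.sum_eq_zero fun t _ => by
          simp only [eQI]; rw [if_neg]; intro hp; exact hA t hp.symm
      have z2 : (∑ s, eQI (a s) (b (finRotate r s)) p) = 0 :=
        Finset.sum_eq_zero fun t _ => by
          simp only [eQI]; rw [if_neg]; intro hp; exact hB t hp.symm
      rw [z1, z2]; ring

section loopfacts
variable {I : ℕ} {i1 i2 i3 j1 j2 j3 : Fin I}

theorem loop2_support {p : Fin I × Fin I}
    (hp : loop2 i1 i2 j1 j2 p ≠ 0) :
    p = (i1, j2) ∨ p = (i2, j1) ∨ p = (i1, j1) ∨ p = (i2, j2) := by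
  by_contra hc
  push_neg at hc
  obtain ⟨e1, e2, e3, e4⟩ := hc
  apply hp
  simp [loop2, eQI, e1, e2, e3, e4]

theorem loop3_support {p : Fin I × Fin I} (hp : loop3 i1 i2 i3 j1 j2 j3 p ≠ 0) :
    p = (i1, j2) ∨ p = (i2, j3) ∨ p = (i3, j1) ∨
      p = (i1, j1) ∨ p = (i2, j2) ∨ p = (i3, j3) := by
  by_contra hc
  push_neg at hc
  obtain ⟨e1, e2, e3, e4, e5, e6⟩ := hc
  apply hp
  simp [loop3, eQI, e1, e2, e3, e4, e5, e6]

theorem isLoopOn_loop2 (hi : i1 ≠ i2) (hj : j1 ≠ j2) :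
    IsLoopOn I 2 (loop2 i1 i2 j1 j2) := by
  refine ⟨le_refl 2, ![i1, i2], ![j2, j1], ?_, ?_, ?_, ?_, ?_⟩
  · intro s t h; fin_cases s <;> fin_cases t <;> simp_all
  · intro s t h; fin_cases s <;> fin_cases t <;> simp_all
  · intro s; fin_cases s <;>
      simp [loop2, eQI, hi, hj, hi.symm, hj.symm, Prod.ext_iff]
  · intro s; fin_cases s <;>
      simp [rot2_0, rot2_1, loop2, eQI, hi, hj, hi.symm, hj.symm, Prod.ext_iff]
  · intro p hp
    have n0 := hp 0
    have n1 := hp 1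
    simp only [rot2_0, rot2_1, Matrix.cons_val_zero, Matrix.cons_val_one, Matrix.head_cons] at n0 n1
    obtain ⟨n0a, n0b⟩ := n0
    obtain ⟨n1a, n1b⟩ := n1
    have e1 : p ≠ (i1, j2) := by rintro rfl; exact n0a ⟨rfl, rfl⟩
    have e2 : p ≠ (i2, j1) := by rintro rfl; exact n1a ⟨rfl, rfl⟩
    have e3 : p ≠ (i1, j1) := by rintro rfl; exact n0b ⟨rfl, rfl⟩
    have e4 : p ≠ (i2, j2) := by rintro rfl; exact n1b ⟨rfl, rfl⟩
    simp [loop2, eQI, e1, e2, e3, e4]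

theorem isLoopOn_loop3 (hi12 : i1 ≠ i2) (hi13 : i1 ≠ i3) (hi23 : i2 ≠ i3)
    (hj12 : j1 ≠ j2) (hj13 : j1 ≠ j3) (hj23 : j2 ≠ j3) :
    IsLoopOn I 3 (loop3 i1 i2 i3 j1 j2 j3) := by
  refine ⟨by norm_num, ![i1, i3, i2], ![j2, j1, j3], ?_, ?_, ?_, ?_, ?_⟩
  · intro s t h; fin_cases s <;> fin_cases t <;> simp_all
  · intro s t h; fin_cases s <;> fin_cases t <;> simp_all
  · intro s; fin_cases s <;>
      simp [loop3, eQI, Prod.ext_iff, hi12, hi13, hi23, hj12, hj13, hj23,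
        hi12.symm, hi13.symm, hi23.symm, hj12.symm, hj13.symm, hj23.symm]
  · intro s; fin_cases s <;>
      simp [rot3_0, rot3_1, rot3_2, loop3, eQI, Prod.ext_iff, hi12, hi13, hi23,
        hj12, hj13, hj23, hi12.symm, hi13.symm, hi23.symm, hj12.symm, hj13.symm, hj23.symm]
  · intro p hp
    have n0 := hp 0
    have n1 := hp 1
    have n2 := hp 2
    simp only [rot3_0, rot3_1, rot3_2, Matrix.cons_val_zero, Matrix.cons_val_one,
      Matrix.head_cons, Matrix.cons_val_two, Matrix.tail_cons] at n0 n1 n2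
    obtain ⟨n0a, n0b⟩ := n0
    obtain ⟨n1a, n1b⟩ := n1
    obtain ⟨n2a, n2b⟩ := n2
    have e1 : p ≠ (i1, j2) := by rintro rfl; exact n0a ⟨rfl, rfl⟩
    have e2 : p ≠ (i1, j1) := by rintro rfl; exact n0b ⟨rfl, rfl⟩
    have e3 : p ≠ (i3, j1) := by rintro rfl; exact n1a ⟨rfl, rfl⟩
    have e4 : p ≠ (i3, j3) := by rintro rfl; exact n1b ⟨rfl, rfl⟩
    have e5 : p ≠ (i2, j3) := by rintro rfl; exact n2a ⟨rfl, rfl⟩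
    have e6 : p ≠ (i2, j2) := by rintro rfl; exact n2b ⟨rfl, rfl⟩
    simp [loop3, eQI, e1, e2, e3, e4, e5, e6]

end loopfacts

theorem card_le_of_inj_range {r I : ℕ} (a : Fin r → Fin I) (ha : Function.Injective a)
    (S : Finset (Fin I)) (hS : ∀ s, a s ∈ S) : r ≤ S.card := by
  have h1 : (Finset.univ.image a).card = r := by
    rw [Finset.card_image_of_injective _ ha, Finset.card_univ, Fintype.card_fin]
  have h2 : Finset.univ.image a ⊆ S := by
    intro x hx
    obtain ⟨s, _, rfl⟩ := Finset.mem_image.mp hx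
    exact hS s
  calc r = (Finset.univ.image a).card := h1.symm
    _ ≤ S.card := Finset.card_le_card h2

theorem loop_rep2 {I : ℕ} (m' : Fin I × Fin I → ℤ) (a b : Fin 2 → Fin I)
    (ha : Function.Injective a) (hb : Function.Injective b)
    (h1 : ∀ s, m' (a s, b s) = 1)
    (h2 : ∀ s, m' (a s, b (finRotate 2 s)) = -1)
    (h3 : ∀ p : Fin I × Fin I,
      (∀ s, ¬(a s = p.1 ∧ b s = p.2) ∧ ¬(a s = p.1 ∧ b (finRotate 2 s) = p.2)) → m' p = 0)
    (x1 x2 y1 y2 : Fin I) (ea0 : a 0 = x1) (ea1 : a 1 = x2) (eb0 : b 0 = y1) (eb1 : b 1 = y2) :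
    m' = eQI x1 y1 + eQI x2 y2 - eQI x1 y2 - eQI x2 y1 := by
  rw [loop_eq_sum (le_refl 2) m' a b ha hb h1 h2 h3]
  simp only [Fin.sum_univ_two, rot2_0, rot2_1, ea0, ea1, eb0, eb1]
  abel

theorem loop_rep3 {I : ℕ} (m' : Fin I × Fin I → ℤ) (a b : Fin 3 → Fin I)
    (ha : Function.Injective a) (hb : Function.Injective b)
    (h1 : ∀ s, m' (a s, b s) = 1)
    (h2 : ∀ s, m' (a s, b (finRotate 3 s)) = -1)
    (h3 : ∀ p : Fin I × Fin I,
      (∀ s, ¬(a s = p.1 ∧ b s = p.2) ∧ ¬(a s = p.1 ∧ b (finRotate 3 s) = p.2)) → m' p = 0)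
    (x1 x2 x3 y1 y2 y3 : Fin I) (ea0 : a 0 = x1) (ea1 : a 1 = x2) (ea2 : a 2 = x3)
    (eb0 : b 0 = y1) (eb1 : b 1 = y2) (eb2 : b 2 = y3) :
    m' = eQI x1 y1 + eQI x2 y2 + eQI x3 y3 - eQI x1 y2 - eQI x2 y3 - eQI x3 y1 := by
  rw [loop_eq_sum (by norm_num) m' a b ha hb h1 h2 h3]
  simp only [Fin.sum_univ_three, rot3_0, rot3_1, rot3_2, ea0, ea1, ea2, eb0, eb1, eb2]
  abel



theorem isDf1_loop2 {I : ℕ} {i1 i2 j1 j2 : Fin I} (hi : i1 ≠ i2) (hj : j1 ≠ j2) :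
    IsDf1Loop I (loop2 i1 i2 j1 j2) := by
  refine ⟨⟨2, isLoopOn_loop2 hi hj⟩, ?_⟩
  rintro m' ⟨r', hr2, a, b, ha, hb, h1, h2, h3⟩ hsupp
  have hsupp' : ∀ p : Fin I × Fin I, m' p ≠ 0 →
      (p = (i1, j2) ∨ p = (i2, j1) ∨ p = (i1, j1) ∨ p = (i2, j2)) :=
    fun p hp => loop2_support (hsupp hp)
  have hrow : ∀ s, a s = i1 ∨ a s = i2 := by
    intro s
    rcases hsupp' _ (by rw [h1 s]; norm_num) with h | h | h | h
    · left; exact congrArg Prod.fst h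
    · right; exact congrArg Prod.fst h
    · left; exact congrArg Prod.fst h
    · right; exact congrArg Prod.fst h
  have hrle : r' ≤ 2 := by
    have hc := card_le_of_inj_range a ha {i1, i2}
      (fun s => by rcases hrow s with h | h <;> simp [h])
    calc r' ≤ ({i1, i2} : Finset (Fin I)).card := hc
      _ ≤ 2 := (Finset.card_insert_le _ _).trans (by simp)
  have hr : r' = 2 := le_antisymm hrle hr2
  subst hr
  have A0 := hsupp' _ (by rw [h1 0]; norm_num)
  have A1 := hsupp' _ (by rw [h1 1]; norm_num)
  simp only [Prod.mk.injEq] at A0 A1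
  rcases A0 with ⟨ea0, eb0⟩ | ⟨ea0, eb0⟩ | ⟨ea0, eb0⟩ | ⟨ea0, eb0⟩ <;>
    rcases A1 with ⟨ea1, eb1⟩ | ⟨ea1, eb1⟩ | ⟨ea1, eb1⟩ | ⟨ea1, eb1⟩
  · exact absurd (ha (ea0.trans ea1.symm)) (by decide)
  · left
    rw [loop_rep2 m' a b ha hb h1 h2 h3 _ _ _ _ ea0 ea1 eb0 eb1]
    unfold loop2
    funext p
    simp only [Pi.add_apply, Pi.sub_apply, Pi.neg_apply]
    try ring
  · exact absurd (ha (ea0.trans ea1.symm)) (by decide)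
  · exact absurd (hb (eb0.trans eb1.symm)) (by decide)
  · left
    rw [loop_rep2 m' a b ha hb h1 h2 h3 _ _ _ _ ea0 ea1 eb0 eb1]
    unfold loop2
    funext p
    simp only [Pi.add_apply, Pi.sub_apply, Pi.neg_apply]
    try ring
  · exact absurd (ha (ea0.trans ea1.symm)) (by decide)
  · exact absurd (hb (eb0.trans eb1.symm)) (by decide)
  · exact absurd (ha (ea0.trans ea1.symm)) (by decide)
  · exact absurd (ha (ea0.trans ea1.symm)) (by decide)
  · exact absurd (hb (eb0.trans eb1.symm)) (by decide)
  · exact absurd (ha (ea0.trans ea1.symm)) (by decide)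
  · right
    rw [loop_rep2 m' a b ha hb h1 h2 h3 _ _ _ _ ea0 ea1 eb0 eb1]
    unfold loop2
    funext p
    simp only [Pi.add_apply, Pi.sub_apply, Pi.neg_apply]
    try ring
  · exact absurd (hb (eb0.trans eb1.symm)) (by decide)
  · exact absurd (ha (ea0.trans ea1.symm)) (by decide)
  · right
    rw [loop_rep2 m' a b ha hb h1 h2 h3 _ _ _ _ ea0 ea1 eb0 eb1]
    unfold loop2
    funext p
    simp only [Pi.add_apply, Pi.sub_apply, Pi.neg_apply]
    try ring
  · exact absurd (ha (ea0.trans ea1.symm)) (by decide)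


theorem isDf1_loop3 {I : ℕ} {i1 i2 i3 j1 j2 j3 : Fin I}
    (hi12 : i1 ≠ i2) (hi13 : i1 ≠ i3) (hi23 : i2 ≠ i3)
    (hj12 : j1 ≠ j2) (hj13 : j1 ≠ j3) (hj23 : j2 ≠ j3) :
    IsDf1Loop I (loop3 i1 i2 i3 j1 j2 j3) := by
  refine ⟨⟨3, isLoopOn_loop3 hi12 hi13 hi23 hj12 hj13 hj23⟩, ?_⟩
  rintro m' ⟨r', hr2, a, b, ha, hb, h1, h2, h3⟩ hsupp
  have hsupp' : ∀ p : Fin I × Fin I, m' p ≠ 0 →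
      (p = (i1, j2) ∨ p = (i2, j3) ∨ p = (i3, j1) ∨
        p = (i1, j1) ∨ p = (i2, j2) ∨ p = (i3, j3)) :=
    fun p hp => loop3_support (hsupp hp)
  have hrow : ∀ s, a s = i1 ∨ a s = i2 ∨ a s = i3 := by
    intro s
    rcases hsupp' _ (by rw [h1 s]; norm_num) with h | h | h | h | h | h
    · left; exact congrArg Prod.fst h
    · right; left; exact congrArg Prod.fst h
    · right; right; exact congrArg Prod.fst h
    · left; exact congrArg Prod.fst h
    · right; left; exact congrArg Prod.fst h
    · right; right; exact congrArg Prod.fst h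
  have hrle : r' ≤ 3 := by
    have hc := card_le_of_inj_range a ha {i1, i2, i3}
      (fun s => by rcases hrow s with h | h | h <;> simp [h])
    calc r' ≤ ({i1, i2, i3} : Finset (Fin I)).card := hc
      _ ≤ 3 := by
        refine (Finset.card_insert_le _ _).trans (Nat.succ_le_succ ?_)
        exact (Finset.card_insert_le _ _).trans (by simp)
  interval_cases r'

  · -- r' = 2 : impossible
    exfalso
    have A0 := hsupp' _ (by rw [h1 0]; norm_num)
    have A1 := hsupp' _ (by rw [h1 1]; norm_num)
    have B0 := hsupp' _ (by rw [h2 0]; norm_num)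
    have B1 := hsupp' _ (by rw [h2 1]; norm_num)
    rw [rot2_0] at B0
    rw [rot2_1] at B1
    simp only [Prod.mk.injEq] at A0 A1 B0 B1
    rcases hrow 0 with ea0 | ea0 | ea0 <;> rcases hrow 1 with ea1 | ea1 | ea1
    · exact absurd (ha (ea0.trans ea1.symm)) (by decide)
    · simp only [ea0, ea1, hi12, hi13, hi23, hi12.symm, hi13.symm, hi23.symm,
        Ne.symm hi12, Ne.symm hi13, Ne.symm hi23, false_and, and_false, false_or,
        or_false, eq_self_iff_true, true_and] at A0 A1 B0 B1
      have hb0 : b 0 = j2 := by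
        rcases A0 with e | e
        · exact e
        · rcases B1 with f | f
          · exact absurd (e.symm.trans f) hj13
          · exact absurd (e.symm.trans f) hj12
      have hb1 : b 1 = j2 := by
        rcases B0 with e | e
        · exact e
        · rcases A1 with f | f
          · exact absurd (e.symm.trans f) hj13
          · exact absurd (e.symm.trans f) hj12
      exact absurd (hb (hb0.trans hb1.symm)) (by decide)
    · simp only [ea0, ea1, hi12, hi13, hi23, hi12.symm, hi13.symm, hi23.symm,
        Ne.symm hi12, Ne.symm hi13, Ne.symm hi23, false_and, and_false, false_or,
        or_false, eq_self_iff_true, true_and] at A0 A1 B0 B1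
      have hb0 : b 0 = j1 := by
        rcases A0 with e | e
        · rcases B1 with f | f
          · exact absurd (e.symm.trans f) hj12.symm
          · exact absurd (e.symm.trans f) hj23
        · exact e
      have hb1 : b 1 = j1 := by
        rcases B0 with e | e
        · rcases A1 with f | f
          · exact absurd (e.symm.trans f) hj12.symm
          · exact absurd (e.symm.trans f) hj23
        · exact e
      exact absurd (hb (hb0.trans hb1.symm)) (by decide)
    · simp only [ea0, ea1, hi12, hi13, hi23, hi12.symm, hi13.symm, hi23.symm,
        Ne.symm hi12, Ne.symm hi13, Ne.symm hi23, false_and, and_false, false_or,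
        or_false, eq_self_iff_true, true_and] at A0 A1 B0 B1
      have hb0 : b 0 = j2 := by
        rcases A0 with e | e
        · rcases B1 with f | f
          · exact absurd (e.symm.trans f) hj23.symm
          · exact absurd (e.symm.trans f) hj13.symm
        · exact e
      have hb1 : b 1 = j2 := by
        rcases B0 with e | e
        · rcases A1 with f | f
          · exact absurd (e.symm.trans f) hj23.symm
          · exact absurd (e.symm.trans f) hj13.symm
        · exact e
      exact absurd (hb (hb0.trans hb1.symm)) (by decide)
    · exact absurd (ha (ea0.trans ea1.symm)) (by decide)
    · simp only [ea0, ea1, hi12, hi13, hi23, hi12.symm, hi13.symm, hi23.symm,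
        Ne.symm hi12, Ne.symm hi13, Ne.symm hi23, false_and, and_false, false_or,
        or_false, eq_self_iff_true, true_and] at A0 A1 B0 B1
      have hb0 : b 0 = j3 := by
        rcases A0 with e | e
        · exact e
        · rcases B1 with f | f
          · exact absurd (e.symm.trans f) hj12.symm
          · exact absurd (e.symm.trans f) hj23
      have hb1 : b 1 = j3 := by
        rcases B0 with e | e
        · exact e
        · rcases A1 with f | f
          · exact absurd (e.symm.trans f) hj12.symm
          · exact absurd (e.symm.trans f) hj23
      exact absurd (hb (hb0.trans hb1.symm)) (by decide)
    · simp only [ea0, ea1, hi12, hi13, hi23, hi12.symm, hi13.symm, hi23.symm,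
        Ne.symm hi12, Ne.symm hi13, Ne.symm hi23, false_and, and_false, false_or,
        or_false, eq_self_iff_true, true_and] at A0 A1 B0 B1
      have hb0 : b 0 = j1 := by
        rcases A0 with e | e
        · exact e
        · rcases B1 with f | f
          · exact absurd (e.symm.trans f) hj23.symm
          · exact absurd (e.symm.trans f) hj13.symm
      have hb1 : b 1 = j1 := by
        rcases B0 with e | e
        · exact e
        · rcases A1 with f | f
          · exact absurd (e.symm.trans f) hj23.symm
          · exact absurd (e.symm.trans f) hj13.symm
      exact absurd (hb (hb0.trans hb1.symm)) (by decide)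
    · simp only [ea0, ea1, hi12, hi13, hi23, hi12.symm, hi13.symm, hi23.symm,
        Ne.symm hi12, Ne.symm hi13, Ne.symm hi23, false_and, and_false, false_or,
        or_false, eq_self_iff_true, true_and] at A0 A1 B0 B1
      have hb0 : b 0 = j3 := by
        rcases A0 with e | e
        · rcases B1 with f | f
          · exact absurd (e.symm.trans f) hj13
          · exact absurd (e.symm.trans f) hj12
        · exact e
      have hb1 : b 1 = j3 := by
        rcases B0 with e | e
        · rcases A1 with f | f
          · exact absurd (e.symm.trans f) hj13
          · exact absurd (e.symm.trans f) hj12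
        · exact e
      exact absurd (hb (hb0.trans hb1.symm)) (by decide)
    · exact absurd (ha (ea0.trans ea1.symm)) (by decide)
  · -- r' = 3
    have A0 := hsupp' _ (by rw [h1 0]; norm_num)
    have A1 := hsupp' _ (by rw [h1 1]; norm_num)
    have A2 := hsupp' _ (by rw [h1 2]; norm_num)
    have B0 := hsupp' _ (by rw [h2 0]; norm_num)
    have B1 := hsupp' _ (by rw [h2 1]; norm_num)
    have B2 := hsupp' _ (by rw [h2 2]; norm_num)
    rw [rot3_0] at B0
    rw [rot3_1] at B1
    rw [rot3_2] at B2
    simp only [Prod.mk.injEq] at A0 A1 A2 B0 B1 B2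
    rcases hrow 0 with ea0 | ea0 | ea0 <;> rcases hrow 1 with ea1 | ea1 | ea1 <;>
      rcases hrow 2 with ea2 | ea2 | ea2
    · exact absurd (ha (ea0.trans ea1.symm)) (by decide)
    · exact absurd (ha (ea0.trans ea1.symm)) (by decide)
    · exact absurd (ha (ea0.trans ea1.symm)) (by decide)
    · exact absurd (ha (ea0.trans ea2.symm)) (by decide)
    · exact absurd (ha (ea1.trans ea2.symm)) (by decide)
    · simp only [ea0, ea1, ea2, hi12, hi13, hi23, hi12.symm, hi13.symm, hi23.symm,
        false_and, and_false, false_or, or_false, eq_self_iff_true, true_and] at A0 A1 A2 B0 B1 B2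
      have hb0 : b 0 = j1 := by
        rcases A0 with e | e
        · rcases B2 with f | f
          · exact absurd (e.symm.trans f) hj12.symm
          · exact absurd (e.symm.trans f) hj23
        · exact e
      have hb1 : b 1 = j2 := by
        rcases A1 with e | e
        · rcases B0 with f | f
          · exact absurd (e.symm.trans f) hj23.symm
          · exact absurd (e.symm.trans f) hj13.symm
        · exact e
      have hb2 : b 2 = j3 := by
        rcases A2 with e | e
        · rcases B1 with f | f
          · exact absurd (e.symm.trans f) hj13
          · exact absurd (e.symm.trans f) hj12
        · exact e
      right
      rw [loop_rep3 m' a b ha hb h1 h2 h3 _ _ _ _ _ _ ea0 ea1 ea2 hb0 hb1 hb2]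
      all_goals unfold loop3
      all_goals funext p
      all_goals simp only [Pi.add_apply, Pi.sub_apply, Pi.neg_apply]
      all_goals ring
    · exact absurd (ha (ea0.trans ea2.symm)) (by decide)
    · simp only [ea0, ea1, ea2, hi12, hi13, hi23, hi12.symm, hi13.symm, hi23.symm,
        false_and, and_false, false_or, or_false, eq_self_iff_true, true_and] at A0 A1 A2 B0 B1 B2
      have hb0 : b 0 = j2 := by
        rcases A0 with e | e
        · exact e
        · rcases B2 with f | f
          · exact absurd (e.symm.trans f) hj13
          · exact absurd (e.symm.trans f) hj12
      have hb1 : b 1 = j1 := by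
        rcases A1 with e | e
        · exact e
        · rcases B0 with f | f
          · exact absurd (e.symm.trans f) hj23.symm
          · exact absurd (e.symm.trans f) hj13.symm
      have hb2 : b 2 = j3 := by
        rcases A2 with e | e
        · exact e
        · rcases B1 with f | f
          · exact absurd (e.symm.trans f) hj12.symm
          · exact absurd (e.symm.trans f) hj23
      left
      rw [loop_rep3 m' a b ha hb h1 h2 h3 _ _ _ _ _ _ ea0 ea1 ea2 hb0 hb1 hb2]
      all_goals unfold loop3
      all_goals funext p
      all_goals simp only [Pi.add_apply, Pi.sub_apply, Pi.neg_apply]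
      all_goals ring
    · exact absurd (ha (ea1.trans ea2.symm)) (by decide)
    · exact absurd (ha (ea1.trans ea2.symm)) (by decide)
    · exact absurd (ha (ea0.trans ea2.symm)) (by decide)
    · simp only [ea0, ea1, ea2, hi12, hi13, hi23, hi12.symm, hi13.symm, hi23.symm,
        false_and, and_false, false_or, or_false, eq_self_iff_true, true_and] at A0 A1 A2 B0 B1 B2
      have hb0 : b 0 = j3 := by
        rcases A0 with e | e
        · exact e
        · rcases B2 with f | f
          · exact absurd (e.symm.trans f) hj12.symm
          · exact absurd (e.symm.trans f) hj23
      have hb1 : b 1 = j2 := by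
        rcases A1 with e | e
        · exact e
        · rcases B0 with f | f
          · exact absurd (e.symm.trans f) hj13
          · exact absurd (e.symm.trans f) hj12
      have hb2 : b 2 = j1 := by
        rcases A2 with e | e
        · exact e
        · rcases B1 with f | f
          · exact absurd (e.symm.trans f) hj23.symm
          · exact absurd (e.symm.trans f) hj13.symm
      left
      rw [loop_rep3 m' a b ha hb h1 h2 h3 _ _ _ _ _ _ ea0 ea1 ea2 hb0 hb1 hb2]
      all_goals unfold loop3
      all_goals funext p
      all_goals simp only [Pi.add_apply, Pi.sub_apply, Pi.neg_apply]
      all_goals ring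
    · exact absurd (ha (ea0.trans ea1.symm)) (by decide)
    · exact absurd (ha (ea0.trans ea1.symm)) (by decide)
    · exact absurd (ha (ea0.trans ea1.symm)) (by decide)
    · simp only [ea0, ea1, ea2, hi12, hi13, hi23, hi12.symm, hi13.symm, hi23.symm,
        false_and, and_false, false_or, or_false, eq_self_iff_true, true_and] at A0 A1 A2 B0 B1 B2
      have hb0 : b 0 = j2 := by
        rcases A0 with e | e
        · rcases B2 with f | f
          · exact absurd (e.symm.trans f) hj23.symm
          · exact absurd (e.symm.trans f) hj13.symm
        · exact e
      have hb1 : b 1 = j3 := by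
        rcases A1 with e | e
        · rcases B0 with f | f
          · exact absurd (e.symm.trans f) hj13
          · exact absurd (e.symm.trans f) hj12
        · exact e
      have hb2 : b 2 = j1 := by
        rcases A2 with e | e
        · rcases B1 with f | f
          · exact absurd (e.symm.trans f) hj12.symm
          · exact absurd (e.symm.trans f) hj23
        · exact e
      right
      rw [loop_rep3 m' a b ha hb h1 h2 h3 _ _ _ _ _ _ ea0 ea1 ea2 hb0 hb1 hb2]
      all_goals unfold loop3
      all_goals funext p
      all_goals simp only [Pi.add_apply, Pi.sub_apply, Pi.neg_apply]
      all_goals ring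
    · exact absurd (ha (ea0.trans ea2.symm)) (by decide)
    · exact absurd (ha (ea1.trans ea2.symm)) (by decide)
    · exact absurd (ha (ea1.trans ea2.symm)) (by decide)
    · simp only [ea0, ea1, ea2, hi12, hi13, hi23, hi12.symm, hi13.symm, hi23.symm,
        false_and, and_false, false_or, or_false, eq_self_iff_true, true_and] at A0 A1 A2 B0 B1 B2
      have hb0 : b 0 = j3 := by
        rcases A0 with e | e
        · rcases B2 with f | f
          · exact absurd (e.symm.trans f) hj13
          · exact absurd (e.symm.trans f) hj12
        · exact e
      have hb1 : b 1 = j1 := by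
        rcases A1 with e | e
        · rcases B0 with f | f
          · exact absurd (e.symm.trans f) hj12.symm
          · exact absurd (e.symm.trans f) hj23
        · exact e
      have hb2 : b 2 = j2 := by
        rcases A2 with e | e
        · rcases B1 with f | f
          · exact absurd (e.symm.trans f) hj23.symm
          · exact absurd (e.symm.trans f) hj13.symm
        · exact e
      right
      rw [loop_rep3 m' a b ha hb h1 h2 h3 _ _ _ _ _ _ ea0 ea1 ea2 hb0 hb1 hb2]
      all_goals unfold loop3
      all_goals funext p
      all_goals simp only [Pi.add_apply, Pi.sub_apply, Pi.neg_apply]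
      all_goals ring
    · exact absurd (ha (ea0.trans ea2.symm)) (by decide)
    · simp only [ea0, ea1, ea2, hi12, hi13, hi23, hi12.symm, hi13.symm, hi23.symm,
        false_and, and_false, false_or, or_false, eq_self_iff_true, true_and] at A0 A1 A2 B0 B1 B2
      have hb0 : b 0 = j1 := by
        rcases A0 with e | e
        · exact e
        · rcases B2 with f | f
          · exact absurd (e.symm.trans f) hj23.symm
          · exact absurd (e.symm.trans f) hj13.symm
      have hb1 : b 1 = j3 := by
        rcases A1 with e | e
        · exact e
        · rcases B0 with f | f
          · exact absurd (e.symm.trans f) hj12.symm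
          · exact absurd (e.symm.trans f) hj23
      have hb2 : b 2 = j2 := by
        rcases A2 with e | e
        · exact e
        · rcases B1 with f | f
          · exact absurd (e.symm.trans f) hj13
          · exact absurd (e.symm.trans f) hj12
      left
      rw [loop_rep3 m' a b ha hb h1 h2 h3 _ _ _ _ _ _ ea0 ea1 ea2 hb0 hb1 hb2]
      all_goals unfold loop3
      all_goals funext p
      all_goals simp only [Pi.add_apply, Pi.sub_apply, Pi.neg_apply]
      all_goals ring
    · exact absurd (ha (ea1.trans ea2.symm)) (by decide)
    · exact absurd (ha (ea0.trans ea2.symm)) (by decide)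
    · exact absurd (ha (ea0.trans ea1.symm)) (by decide)
    · exact absurd (ha (ea0.trans ea1.symm)) (by decide)
    · exact absurd (ha (ea0.trans ea1.symm)) (by decide)


section loopvals
variable {I : ℕ} {i1 i2 i3 j1 j2 j3 : Fin I}

theorem pair_diag_ne {x y : Fin I} (hxy : x ≠ y) (i : Fin I) : (i, i) ≠ (x, y) := by
  intro h
  rw [Prod.ext_iff] at h
  exact hxy (h.1.symm.trans h.2)

theorem loop2_apply (p : Fin I × Fin I) :
    loop2 i1 i2 j1 j2 p = (if p = (i1, j2) then 1 else 0) + (if p = (i2, j1) then 1 else 0)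
      - (if p = (i1, j1) then 1 else 0) - (if p = (i2, j2) then 1 else 0) := rfl

theorem loop3_apply (p : Fin I × Fin I) :
    loop3 i1 i2 i3 j1 j2 j3 p = (if p = (i1, j2) then 1 else 0) + (if p = (i2, j3) then 1 else 0)
      + (if p = (i3, j1) then 1 else 0) - (if p = (i1, j1) then 1 else 0)
      - (if p = (i2, j2) then 1 else 0) - (if p = (i3, j3) then 1 else 0) := rfl

theorem loop2_bound (hi : i1 ≠ i2) (hj : j1 ≠ j2) (p : Fin I × Fin I) :
    -1 ≤ loop2 i1 i2 j1 j2 p ∧ loop2 i1 i2 j1 j2 p ≤ 1 := by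
  rw [loop2_apply]
  rcases eq_or_ne p (i1, j2) with rfl | n1
  · rw [if_pos rfl, if_neg (by simp [Prod.ext_iff, hi]), if_neg (by simp [Prod.ext_iff, hj.symm]),
      if_neg (by simp [Prod.ext_iff, hi])]
    omega
  rcases eq_or_ne p (i2, j1) with rfl | n2
  · rw [if_neg n1, if_pos rfl, if_neg (by simp [Prod.ext_iff, hi.symm]),
      if_neg (by simp [Prod.ext_iff, hj])]
    omega
  rcases eq_or_ne p (i1, j1) with rfl | n3
  · rw [if_neg n1, if_neg n2, if_pos rfl, if_neg (by simp [Prod.ext_iff, hi])]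
    omega
  rcases eq_or_ne p (i2, j2) with rfl | n4
  · rw [if_neg n1, if_neg n2, if_neg n3, if_pos rfl]; omega
  · rw [if_neg n1, if_neg n2, if_neg n3, if_neg n4]; omega

theorem loop3_bound (hi12 : i1 ≠ i2) (hi13 : i1 ≠ i3) (hi23 : i2 ≠ i3)
    (hj12 : j1 ≠ j2) (hj13 : j1 ≠ j3) (hj23 : j2 ≠ j3) (p : Fin I × Fin I) :
    -1 ≤ loop3 i1 i2 i3 j1 j2 j3 p ∧ loop3 i1 i2 i3 j1 j2 j3 p ≤ 1 := by
  rw [loop3_apply]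
  rcases eq_or_ne p (i1, j2) with rfl | n1
  · rw [if_pos rfl, if_neg (by simp [Prod.ext_iff, hi12]), if_neg (by simp [Prod.ext_iff, hi13]),
      if_neg (by simp [Prod.ext_iff, hj12.symm]), if_neg (by simp [Prod.ext_iff, hi12]),
      if_neg (by simp [Prod.ext_iff, hi13])]
    omega
  rcases eq_or_ne p (i2, j3) with rfl | n2
  · rw [if_neg n1, if_pos rfl, if_neg (by simp [Prod.ext_iff, hi23]),
      if_neg (by simp [Prod.ext_iff, hi12.symm]), if_neg (by simp [Prod.ext_iff, hj23.symm]),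
      if_neg (by simp [Prod.ext_iff, hi23])]
    omega
  rcases eq_or_ne p (i3, j1) with rfl | n3
  · rw [if_neg n1, if_neg n2, if_pos rfl, if_neg (by simp [Prod.ext_iff, hi13.symm]),
      if_neg (by simp [Prod.ext_iff, hi23.symm]), if_neg (by simp [Prod.ext_iff, hj13])]
    omega
  rcases eq_or_ne p (i1, j1) with rfl | n4
  · rw [if_neg n1, if_neg n2, if_neg n3, if_pos rfl, if_neg (by simp [Prod.ext_iff, hi12]),
      if_neg (by simp [Prod.ext_iff, hi13])]
    omega
  rcases eq_or_ne p (i2, j2) with rfl | n5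
  · rw [if_neg n1, if_neg n2, if_neg n3, if_neg n4, if_pos rfl,
      if_neg (by simp [Prod.ext_iff, hi23])]
    omega
  rcases eq_or_ne p (i3, j3) with rfl | n6
  · rw [if_neg n1, if_neg n2, if_neg n3, if_neg n4, if_neg n5, if_pos rfl]; omega
  · rw [if_neg n1, if_neg n2, if_neg n3, if_neg n4, if_neg n5, if_neg n6]; omega

theorem loop2_neg_support (hi : i1 ≠ i2) (hj : j1 ≠ j2) {p : Fin I × Fin I}
    (h : loop2 i1 i2 j1 j2 p < 0) : p = (i1, j1) ∨ p = (i2, j2) := by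
  have hne : loop2 i1 i2 j1 j2 p ≠ 0 := by omega
  rcases loop2_support hne with h1 | h1 | h1 | h1
  · subst h1
    rw [loop2_apply, if_pos rfl, if_neg (by simp [Prod.ext_iff, hi]),
      if_neg (by simp [Prod.ext_iff, hj.symm]), if_neg (by simp [Prod.ext_iff, hi])] at h
    omega
  · subst h1
    rw [loop2_apply, if_neg (by simp [Prod.ext_iff, hi.symm]), if_pos rfl,
      if_neg (by simp [Prod.ext_iff, hi.symm]), if_neg (by simp [Prod.ext_iff, hj])] at h
    omega
  · left; exact h1
  · right; exact h1

theorem loop3_neg_support (hi12 : i1 ≠ i2) (hi13 : i1 ≠ i3) (hi23 : i2 ≠ i3)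
    (hj12 : j1 ≠ j2) (hj13 : j1 ≠ j3) (hj23 : j2 ≠ j3) {p : Fin I × Fin I}
    (h : loop3 i1 i2 i3 j1 j2 j3 p < 0) :
    p = (i1, j1) ∨ p = (i2, j2) ∨ p = (i3, j3) := by
  have hne : loop3 i1 i2 i3 j1 j2 j3 p ≠ 0 := by omega
  rcases loop3_support hne with h1 | h1 | h1 | h1 | h1 | h1
  · subst h1
    rw [loop3_apply, if_pos rfl, if_neg (by simp [Prod.ext_iff, hi12]),
      if_neg (by simp [Prod.ext_iff, hi13]), if_neg (by simp [Prod.ext_iff, hj12.symm]),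
      if_neg (by simp [Prod.ext_iff, hi12]), if_neg (by simp [Prod.ext_iff, hi13])] at h
    omega
  · subst h1
    rw [loop3_apply, if_neg (by simp [Prod.ext_iff, hi12.symm]), if_pos rfl,
      if_neg (by simp [Prod.ext_iff, hi23]), if_neg (by simp [Prod.ext_iff, hi12.symm]),
      if_neg (by simp [Prod.ext_iff, hj23.symm]), if_neg (by simp [Prod.ext_iff, hi23])] at h
    omega
  · subst h1
    rw [loop3_apply, if_neg (by simp [Prod.ext_iff, hi13.symm]),
      if_neg (by simp [Prod.ext_iff, hi23.symm]), if_pos rfl,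
      if_neg (by simp [Prod.ext_iff, hi13.symm]), if_neg (by simp [Prod.ext_iff, hi23.symm]),
      if_neg (by simp [Prod.ext_iff, hj13])] at h
    omega
  · left; exact h1
  · right; left; exact h1
  · right; right; exact h1

theorem eQI_row (a b i : Fin I) : (∑ j, eQI a b (i, j)) = if i = a then 1 else 0 := by
  rcases eq_or_ne i a with rfl | h
  · simp [eQI, Prod.ext_iff]
  · simp [eQI, Prod.ext_iff, h]

theorem eQI_col (a b j : Fin I) : (∑ i, eQI a b (i, j)) = if j = b then 1 else 0 := by
  rcases eq_or_ne j b with rfl | h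
  · simp [eQI, Prod.ext_iff]
  · simp [eQI, Prod.ext_iff, h]

theorem loop2_row (i : Fin I) : (∑ j, loop2 i1 i2 j1 j2 (i, j)) = 0 := by
  unfold loop2
  simp only [Pi.add_apply, Pi.sub_apply, Finset.sum_add_distrib, Finset.sum_sub_distrib, eQI_row]
  split_ifs <;> ring

theorem loop2_col (j : Fin I) : (∑ i, loop2 i1 i2 j1 j2 (i, j)) = 0 := by
  unfold loop2
  simp only [Pi.add_apply, Pi.sub_apply, Finset.sum_add_distrib, Finset.sum_sub_distrib, eQI_col]
  split_ifs <;> ring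

theorem loop3_row (i : Fin I) : (∑ j, loop3 i1 i2 i3 j1 j2 j3 (i, j)) = 0 := by
  unfold loop3
  simp only [Pi.add_apply, Pi.sub_apply, Finset.sum_add_distrib, Finset.sum_sub_distrib, eQI_row]
  split_ifs <;> ring

theorem loop3_col (j : Fin I) : (∑ i, loop3 i1 i2 i3 j1 j2 j3 (i, j)) = 0 := by
  unfold loop3
  simp only [Pi.add_apply, Pi.sub_apply, Finset.sum_add_distrib, Finset.sum_sub_distrib, eQI_col]
  split_ifs <;> ring

theorem loop2_diag (h11 : i1 ≠ j1) (h12 : i1 ≠ j2) (h21 : i2 ≠ j1) (h22 : i2 ≠ j2) (i : Fin I) :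
    loop2 i1 i2 j1 j2 (i, i) = 0 := by
  rw [loop2_apply, if_neg (pair_diag_ne h12 i), if_neg (pair_diag_ne h21 i),
    if_neg (pair_diag_ne h11 i), if_neg (pair_diag_ne h22 i)]
  ring

theorem loop3_diag (h11 : i1 ≠ j1) (h12 : i1 ≠ j2) (h22 : i2 ≠ j2) (h23 : i2 ≠ j3)
    (h33 : i3 ≠ j3) (h31 : i3 ≠ j1) (i : Fin I) :
    loop3 i1 i2 i3 j1 j2 j3 (i, i) = 0 := by
  rw [loop3_apply, if_neg (pair_diag_ne h12 i), if_neg (pair_diag_ne h23 i),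
    if_neg (pair_diag_ne h31 i), if_neg (pair_diag_ne h11 i),
    if_neg (pair_diag_ne h22 i), if_neg (pair_diag_ne h33 i)]
  ring

end loopvals


theorem sum_natAbs_lt_aux {α : Type*} [Fintype α] [DecidableEq α] (f g : α → ℤ) (S : Finset α)
    (hout : ∀ p ∉ S, f p = g p)
    (hin : ∑ p ∈ S, (f p).natAbs < ∑ p ∈ S, (g p).natAbs) :
    ∑ p, (f p).natAbs < ∑ p, (g p).natAbs := by
  have h1 : ∑ p ∈ Finset.univ \ S, (f p).natAbs + ∑ p ∈ S, (f p).natAbs = ∑ p, (f p).natAbs :=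
    Finset.sum_sdiff (S.subset_univ)
  have h2 : ∑ p ∈ Finset.univ \ S, (g p).natAbs + ∑ p ∈ S, (g p).natAbs = ∑ p, (g p).natAbs :=
    Finset.sum_sdiff (S.subset_univ)
  have heq : ∑ p ∈ Finset.univ \ S, (f p).natAbs = ∑ p ∈ Finset.univ \ S, (g p).natAbs := by
    refine Finset.sum_congr rfl fun p hp => ?_
    rw [hout p (by simpa using (Finset.mem_sdiff.mp hp).2)]
  omega

theorem exists_pos_of_sum_zero {ι : Type*} [Fintype ι] (d : ι → ℤ) (hsum : ∑ i, d i = 0)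
    {i0 : ι} (hneg : d i0 < 0) : ∃ i, 0 < d i := by
  by_contra hc
  push_neg at hc
  have : ∑ i, d i < ∑ i : ι, (0 : ℤ) :=
    Finset.sum_lt_sum (fun i _ => hc i) ⟨i0, Finset.mem_univ _, hneg⟩
  simp [hsum] at this

theorem exists_neg_of_sum_zero {ι : Type*} [Fintype ι] (d : ι → ℤ) (hsum : ∑ i, d i = 0)
    {i0 : ι} (hpos : 0 < d i0) : ∃ i, d i < 0 := by
  obtain ⟨i, hi⟩ := exists_pos_of_sum_zero (fun i => -(d i)) (by simp [hsum])
    (i0 := i0) (by simpa using hpos)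
  exact ⟨i, by omega⟩

theorem sum4 {α : Type*} [DecidableEq α] (f : α → ℕ) (q1 q2 q3 q4 : α)
    (h12 : q1 ≠ q2) (h13 : q1 ≠ q3) (h14 : q1 ≠ q4)
    (h23 : q2 ≠ q3) (h24 : q2 ≠ q4) (h34 : q3 ≠ q4) :
    ∑ p ∈ ({q1, q2, q3, q4} : Finset α), f p = f q1 + f q2 + f q3 + f q4 := by
  rw [Finset.sum_insert (by simp [h12, h13, h14]),
    Finset.sum_insert (by simp [h23, h24]),
    Finset.sum_insert (by simp [h34]), Finset.sum_singleton]
  ring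

theorem sum6 {α : Type*} [DecidableEq α] (f : α → ℕ) (q1 q2 q3 q4 q5 q6 : α)
    (h12 : q1 ≠ q2) (h13 : q1 ≠ q3) (h14 : q1 ≠ q4) (h15 : q1 ≠ q5) (h16 : q1 ≠ q6)
    (h23 : q2 ≠ q3) (h24 : q2 ≠ q4) (h25 : q2 ≠ q5) (h26 : q2 ≠ q6)
    (h34 : q3 ≠ q4) (h35 : q3 ≠ q5) (h36 : q3 ≠ q6)
    (h45 : q4 ≠ q5) (h46 : q4 ≠ q6) (h56 : q5 ≠ q6) :
    ∑ p ∈ ({q1, q2, q3, q4, q5, q6} : Finset α), f p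
      = f q1 + f q2 + f q3 + f q4 + f q5 + f q6 := by
  rw [Finset.sum_insert (by simp [h12, h13, h14, h15, h16]),
    Finset.sum_insert (by simp [h23, h24, h25, h26]),
    Finset.sum_insert (by simp [h34, h35, h36]),
    Finset.sum_insert (by simp [h45, h46]),
    Finset.sum_insert (by simp [h56]), Finset.sum_singleton]
  ring

theorem sum_cells_triple_if {I H : ℕ} (x y : Fin I) (z h : Fin H) (A : ℤ) :
    (∑ i, ∑ j, if ((i, j, h) : Fin I × Fin I × Fin H) = (x, y, z) then A else 0)
      = if h = z then A else 0 := by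
  rcases eq_or_ne h z with rfl | hz
  · rw [Finset.sum_eq_single_of_mem x (Finset.mem_univ _)]
    · rw [Finset.sum_eq_single_of_mem y (Finset.mem_univ _)]
      · simp
      · intro t _ ht; simp [Prod.ext_iff, ht]
    · intro t _ ht
      refine Finset.sum_eq_zero fun j _ => ?_
      simp [Prod.ext_iff, ht]
  · simp [Prod.ext_iff, hz]

theorem sum_layers_triple_if {I H : ℕ} (x' y' x y : Fin I) (z : Fin H) (A : ℤ) :
    (∑ h, if ((x', y', h) : Fin I × Fin I × Fin H) = (x, y, z) then A else 0)
      = if x' = x ∧ y' = y then A else 0 := by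
  by_cases hxy : x' = x ∧ y' = y
  · obtain ⟨rfl, rfl⟩ := hxy
    rw [Finset.sum_eq_single_of_mem z (Finset.mem_univ _)]
    · simp
    · intro t _ ht; simp [Prod.ext_iff, ht]
  · rw [if_neg hxy]
    refine Finset.sum_eq_zero fun h _ => ?_
    rw [if_neg]
    intro hc
    rw [Prod.ext_iff] at hc
    obtain ⟨h1, h2⟩ := hc
    rw [Prod.ext_iff] at h2
    exact hxy ⟨h1, h2.1⟩

theorem Bmove_layer_sum {I H : ℕ} (c₁ c₂ : Fin I × Fin I) (h₁ h₂ : Fin H) (h : Fin H) :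
    (∑ i, ∑ j, Bmove I H c₁ c₂ h₁ h₂ (i, j, h)) = 0 := by
  unfold Bmove
  simp only [Finset.sum_add_distrib]
  rw [sum_cells_triple_if, sum_cells_triple_if, sum_cells_triple_if, sum_cells_triple_if]
  split_ifs <;> ring

theorem Bmove_cell_sum {I H : ℕ} (c₁ c₂ : Fin I × Fin I) (h₁ h₂ : Fin H) (hne : h₁ ≠ h₂)
    (i : Fin I) (j : Fin I) :
    (∑ h, Bmove I H c₁ c₂ h₁ h₂ (i, j, h)) = 0 := by
  unfold Bmove
  simp only [Finset.sum_add_distrib]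
  rw [sum_layers_triple_if, sum_layers_triple_if, sum_layers_triple_if, sum_layers_triple_if]
  split_ifs <;> ring

theorem phase2 {I H : ℕ} (M : Set (Fin I × Fin I × Fin H → ℤ)) (hM : B2 I H ⊆ M) :
    ∀ n (u v : Fin I × Fin I × Fin H → ℤ),
      (∀ p, 0 ≤ u p) → (∀ p, 0 ≤ v p) →
      (∀ h, (∑ i, ∑ j, u (i, j, h)) = ∑ i, ∑ j, v (i, j, h)) →
      (∀ i j, (∑ h, u (i, j, h)) = ∑ h, v (i, j, h)) →
      (∑ p, (u p - v p).natAbs) ≤ n →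
      Steps M u v := by
  intro n
  induction n with
  | zero =>
    intro u v hu hv hlay hcell hle
    have huv : u = v := by
      funext p
      have h0 : (u p - v p).natAbs = 0 := by
        have hz : (∑ p, (u p - v p).natAbs) = 0 := le_antisymm hle (Nat.zero_le _)
        exact Finset.sum_eq_zero_iff.mp hz p (Finset.mem_univ _)
      omega
    exact huv ▸ Relation.ReflTransGen.refl
  | succ n ih =>
    intro u v hu hv hlay hcell hle
    by_cases huv : u = v
    · exact huv ▸ Relation.ReflTransGen.refl
    obtain ⟨p0, hp0⟩ : ∃ p, u p - v p ≠ 0 := by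
      by_contra hc
      push_neg at hc
      exact huv (funext fun p => by have := hc p; omega)
    obtain ⟨i0, j0, h0⟩ := p0
    -- cell sums of the difference vanish
    have hcell' : ∀ i j, (∑ h, (u (i, j, h) - v (i, j, h))) = 0 := by
      intro i j
      rw [Finset.sum_sub_distrib, hcell i j, sub_self]
    have hlay' : ∀ h, (∑ c : Fin I × Fin I, (u (c.1, c.2, h) - v (c.1, c.2, h))) = 0 := by
      intro h
      rw [Finset.sum_sub_distrib]
      rw [Fintype.sum_prod_type, Fintype.sum_prod_type]
      rw [hlay h, sub_self]
    obtain ⟨h1, hpos⟩ : ∃ h, 0 < u (i0, j0, h) - v (i0, j0, h) := by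
      rcases lt_or_gt_of_ne hp0 with hlt | hgt
      · exact exists_pos_of_sum_zero (fun h => u (i0, j0, h) - v (i0, j0, h)) (hcell' i0 j0) hlt
      · exact ⟨h0, hgt⟩
    obtain ⟨h2, hneg⟩ : ∃ h, u (i0, j0, h) - v (i0, j0, h) < 0 :=
      exists_neg_of_sum_zero (fun h => u (i0, j0, h) - v (i0, j0, h)) (hcell' i0 j0) hpos
    have hh12 : h1 ≠ h2 := by intro hE; rw [hE] at hpos; omega
    obtain ⟨⟨cx, cy⟩, hcpos⟩ : ∃ c : Fin I × Fin I, 0 < u (c.1, c.2, h2) - v (c.1, c.2, h2) :=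
      exists_pos_of_sum_zero (fun c : Fin I × Fin I => u (c.1, c.2, h2) - v (c.1, c.2, h2))
        (hlay' h2) (i0 := (i0, j0)) hneg
    simp only at hcpos
    have hcne' : ¬(i0 = cx ∧ j0 = cy) := by
      rintro ⟨rfl, rfl⟩
      omega
    -- the move
    set q1 : Fin I × Fin I × Fin H := (i0, j0, h2) with hq1def
    set q2 : Fin I × Fin I × Fin H := (cx, cy, h2) with hq2def
    set q3 : Fin I × Fin I × Fin H := (i0, j0, h1) with hq3def
    set q4 : Fin I × Fin I × Fin H := (cx, cy, h1) with hq4def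
    have hd12 : q1 ≠ q2 := by simp [hq1def, hq2def, Prod.ext_iff]; tauto
    have hd13 : q1 ≠ q3 := by simp [hq1def, hq3def, Prod.ext_iff]; intros; exact hh12.symm
    have hd14 : q1 ≠ q4 := by simp [hq1def, hq4def, Prod.ext_iff]; tauto
    have hd23 : q2 ≠ q3 := by simp [hq2def, hq3def, Prod.ext_iff]; tauto
    have hd24 : q2 ≠ q4 := by simp [hq2def, hq4def, Prod.ext_iff]; intros; exact hh12.symm
    have hd34 : q3 ≠ q4 := by simp [hq3def, hq4def, Prod.ext_iff]; tauto
    set bm := Bmove I H (i0, j0) (cx, cy) h2 h1 with hbmdef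
    have hbm : ∀ p, bm p = (if p = q1 then 1 else 0) + (if p = q2 then -1 else 0) +
        (if p = q3 then -1 else 0) + (if p = q4 then 1 else 0) := by
      intro p; rfl
    have hbq1 : bm q1 = 1 := by
      rw [hbm q1, if_pos rfl, if_neg hd12, if_neg hd13, if_neg hd14]; ring
    have hbq2 : bm q2 = -1 := by
      rw [hbm q2, if_neg (Ne.symm hd12), if_pos rfl, if_neg hd23, if_neg hd24]; ring
    have hbq3 : bm q3 = -1 := by
      rw [hbm q3, if_neg (Ne.symm hd13), if_neg (Ne.symm hd23), if_pos rfl, if_neg hd34]; ring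
    have hbq4 : bm q4 = 1 := by
      rw [hbm q4, if_neg (Ne.symm hd14), if_neg (Ne.symm hd24), if_neg (Ne.symm hd34), if_pos rfl]
      ring
    have hbz : ∀ p, p ≠ q1 → p ≠ q2 → p ≠ q3 → p ≠ q4 → bm p = 0 := by
      intro p e1 e2 e3 e4
      rw [hbm p, if_neg e1, if_neg e2, if_neg e3, if_neg e4]; ring
    set u' := fun p => u p + bm p with hu'def
    have hu' : ∀ p, 0 ≤ u' p := by
      intro p
      have hvp := hv p
      have hup := hu p
      simp only [hu'def]
      rcases eq_or_ne p q2 with he | e2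
      · have hbp : bm p = -1 := by rw [he]; exact hbq2
        have hd : 0 < u p - v p := by rw [he]; exact hcpos
        omega
      rcases eq_or_ne p q3 with he | e3
      · have hbp : bm p = -1 := by rw [he]; exact hbq3
        have hd : 0 < u p - v p := by rw [he]; exact hpos
        omega
      rcases eq_or_ne p q1 with he | e1
      · have hbp : bm p = 1 := by rw [he]; exact hbq1
        omega
      rcases eq_or_ne p q4 with he | e4
      · have hbp : bm p = 1 := by rw [he]; exact hbq4
        omega
      · have hbp := hbz p e1 e2 e3 e4
        omega
    have hstep : StepRel M u u' := by
      refine ⟨hu, hu', ?_⟩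
      have : u' - u = bm := by funext p; simp [hu'def]
      rw [this]
      exact hM ⟨(i0, j0), (cx, cy), h2, h1,
        (by intro hE; rw [Prod.ext_iff] at hE; exact hcne' ⟨hE.1, hE.2⟩),
        hh12.symm, Or.inl rfl⟩
    refine Relation.ReflTransGen.head hstep (ih u' v hu' hv ?_ ?_ ?_)
    · intro h
      have : (∑ i, ∑ j, u' (i, j, h)) = (∑ i, ∑ j, u (i, j, h)) := by
        simp only [hu'def, Finset.sum_add_distrib]
        rw [hbmdef, Bmove_layer_sum]
        ring
      rw [this, hlay h]
    · intro i j
      have : (∑ h, u' (i, j, h)) = (∑ h, u (i, j, h)) := by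
        simp only [hu'def, Finset.sum_add_distrib]
        rw [hbmdef, Bmove_cell_sum _ _ _ _ hh12.symm]
        ring
      rw [this, hcell i j]
    · have hlt : (∑ p, (u' p - v p).natAbs) < ∑ p, (u p - v p).natAbs := by
        refine sum_natAbs_lt_aux _ _ {q1, q2, q3, q4} ?_ ?_
        · intro p hp
          simp only [Finset.mem_insert, Finset.mem_singleton] at hp
          push_neg at hp
          obtain ⟨e1, e2, e3, e4⟩ := hp
          simp only [hu'def, hbz p e1 e2 e3 e4]
          ring_nf
        · rw [sum4 _ _ _ _ _ hd12 hd13 hd14 hd23 hd24 hd34,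
            sum4 _ _ _ _ _ hd12 hd13 hd14 hd23 hd24 hd34]
          simp only [hu'def, hbq1, hbq2, hbq3, hbq4]
          have e1 : u q1 - v q1 < 0 := hneg
          have e2 : 0 < u q2 - v q2 := hcpos
          have e3 : 0 < u q3 - v q3 := hpos
          omega
      omega


section vals
variable {I : ℕ} {x1 x2 x3 y1 y2 y3 : Fin I}

theorem loop2_v1 (hi : x1 ≠ x2) (hj : y1 ≠ y2) : loop2 x1 x2 y1 y2 (x1, y2) = 1 := by
  rw [loop2_apply, if_pos rfl, if_neg (by simp [Prod.ext_iff, hi, hj, hi.symm, hj.symm]), if_neg (by simp [Prod.ext_iff, hi, hj, hi.symm, hj.symm]), if_neg (by simp [Prod.ext_iff, hi, hj, hi.symm, hj.symm])]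
  ring

theorem loop2_v2 (hi : x1 ≠ x2) (hj : y1 ≠ y2) : loop2 x1 x2 y1 y2 (x2, y1) = 1 := by
  rw [loop2_apply, if_neg (by simp [Prod.ext_iff, hi, hj, hi.symm, hj.symm]), if_pos rfl, if_neg (by simp [Prod.ext_iff, hi, hj, hi.symm, hj.symm]), if_neg (by simp [Prod.ext_iff, hi, hj, hi.symm, hj.symm])]
  ring

theorem loop2_v3 (hi : x1 ≠ x2) (hj : y1 ≠ y2) : loop2 x1 x2 y1 y2 (x1, y1) = -1 := by
  rw [loop2_apply, if_neg (by simp [Prod.ext_iff, hi, hj, hi.symm, hj.symm]), if_neg (by simp [Prod.ext_iff, hi, hj, hi.symm, hj.symm]), if_pos rfl, if_neg (by simp [Prod.ext_iff, hi, hj, hi.symm, hj.symm])]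
  ring

theorem loop2_v4 (hi : x1 ≠ x2) (hj : y1 ≠ y2) : loop2 x1 x2 y1 y2 (x2, y2) = -1 := by
  rw [loop2_apply, if_neg (by simp [Prod.ext_iff, hi, hj, hi.symm, hj.symm]), if_neg (by simp [Prod.ext_iff, hi, hj, hi.symm, hj.symm]), if_neg (by simp [Prod.ext_iff, hi, hj, hi.symm, hj.symm]), if_pos rfl]
  ring

theorem loop3_v1 (hi12 : x1 ≠ x2) (hi13 : x1 ≠ x3) (hi23 : x2 ≠ x3)
    (hj12 : y1 ≠ y2) (hj13 : y1 ≠ y3) (hj23 : y2 ≠ y3) :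
    loop3 x1 x2 x3 y1 y2 y3 (x1, y2) = 1 := by
  rw [loop3_apply, if_pos rfl, if_neg (by simp [Prod.ext_iff, hi12, hi13, hi23, hj12, hj13, hj23, hi12.symm, hi13.symm, hi23.symm, hj12.symm, hj13.symm, hj23.symm]), if_neg (by simp [Prod.ext_iff, hi12, hi13, hi23, hj12, hj13, hj23, hi12.symm, hi13.symm, hi23.symm, hj12.symm, hj13.symm, hj23.symm]), if_neg (by simp [Prod.ext_iff, hi12, hi13, hi23, hj12, hj13, hj23, hi12.symm, hi13.symm, hi23.symm, hj12.symm, hj13.symm, hj23.symm]), if_neg (by simp [Prod.ext_iff, hi12, hi13, hi23, hj12, hj13, hj23, hi12.symm, hi13.symm, hi23.symm, hj12.symm, hj13.symm, hj23.symm]), if_neg (by simp [Prod.ext_iff, hi12, hi13, hi23, hj12, hj13, hj23, hi12.symm, hi13.symm, hi23.symm, hj12.symm, hj13.symm, hj23.symm])]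
  ring

theorem loop3_v2 (hi12 : x1 ≠ x2) (hi13 : x1 ≠ x3) (hi23 : x2 ≠ x3)
    (hj12 : y1 ≠ y2) (hj13 : y1 ≠ y3) (hj23 : y2 ≠ y3) :
    loop3 x1 x2 x3 y1 y2 y3 (x2, y3) = 1 := by
  rw [loop3_apply, if_neg (by simp [Prod.ext_iff, hi12, hi13, hi23, hj12, hj13, hj23, hi12.symm, hi13.symm, hi23.symm, hj12.symm, hj13.symm, hj23.symm]), if_pos rfl, if_neg (by simp [Prod.ext_iff, hi12, hi13, hi23, hj12, hj13, hj23, hi12.symm, hi13.symm, hi23.symm, hj12.symm, hj13.symm, hj23.symm]), if_neg (by simp [Prod.ext_iff, hi12, hi13, hi23, hj12, hj13, hj23, hi12.symm, hi13.symm, hi23.symm, hj12.symm, hj13.symm, hj23.symm]), if_neg (by simp [Prod.ext_iff, hi12, hi13, hi23, hj12, hj13, hj23, hi12.symm, hi13.symm, hi23.symm, hj12.symm, hj13.symm, hj23.symm]), if_neg (by simp [Prod.ext_iff, hi12, hi13, hi23, hj12, hj13, hj23, hi12.symm, hi13.symm, hi23.symm, hj12.symm, hj13.symm, hj23.symm]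)]
  ring

theorem loop3_v3 (hi12 : x1 ≠ x2) (hi13 : x1 ≠ x3) (hi23 : x2 ≠ x3)
    (hj12 : y1 ≠ y2) (hj13 : y1 ≠ y3) (hj23 : y2 ≠ y3) :
    loop3 x1 x2 x3 y1 y2 y3 (x3, y1) = 1 := by
  rw [loop3_apply, if_neg (by simp [Prod.ext_iff, hi12, hi13, hi23, hj12, hj13, hj23, hi12.symm, hi13.symm, hi23.symm, hj12.symm, hj13.symm, hj23.symm]), if_neg (by simp [Prod.ext_iff, hi12, hi13, hi23, hj12, hj13, hj23, hi12.symm, hi13.symm, hi23.symm, hj12.symm, hj13.symm, hj23.symm]), if_pos rfl, if_neg (by simp [Prod.ext_iff, hi12, hi13, hi23, hj12, hj13, hj23, hi12.symm, hi13.symm, hi23.symm, hj12.symm, hj13.symm, hj23.symm]), if_neg (by simp [Prod.ext_iff, hi12, hi13, hi23, hj12, hj13, hj23, hi12.symm, hi13.symm, hi23.symm, hj12.symm, hj13.symm, hj23.symm]), if_neg (by simp [Prod.ext_iff, hi12, hi13, hi23, hj12, hj13, hj23, hi12.symm, hi13.symm, hi23.symm, hj12.symm, hj13.symm, hj23.s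ymm])]
  ring

theorem loop3_v4 (hi12 : x1 ≠ x2) (hi13 : x1 ≠ x3) (hi23 : x2 ≠ x3)
    (hj12 : y1 ≠ y2) (hj13 : y1 ≠ y3) (hj23 : y2 ≠ y3) :
    loop3 x1 x2 x3 y1 y2 y3 (x1, y1) = -1 := by
  rw [loop3_apply, if_neg (by simp [Prod.ext_iff, hi12, hi13, hi23, hj12, hj13, hj23, hi12.symm, hi13.symm, hi23.symm, hj12.symm, hj13.symm, hj23.symm]), if_neg (by simp [Prod.ext_iff, hi12, hi13, hi23, hj12, hj13, hj23, hi12.symm, hi13.symm, hi23.symm, hj12.symm, hj13.symm, hj23.symm]), if_neg (by simp [Prod.ext_iff, hi12, hi13, hi23, hj12, hj13, hj23, hi12.symm, hi13.symm, hi23.symm, hj12.symm, hj13.symm, hj23.symm]), if_pos rfl, if_neg (by simp [Prod.ext_iff, hi12, hi13, hi23, hj12, hj13, hj23, hi12.symm, hi13.symm, hi23.symm, hj12.symm, hj13.symm, hj23.symm]), if_neg (by simp [Prod.ext_iff, hi12, hi13, hi23, hj12, hj13, hj23, hi12.symm, hi13.symm, hi23.symm, hj12.symm, hj13.symm, hj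23.symm])]
  ring

theorem loop3_v5 (hi12 : x1 ≠ x2) (hi13 : x1 ≠ x3) (hi23 : x2 ≠ x3)
    (hj12 : y1 ≠ y2) (hj13 : y1 ≠ y3) (hj23 : y2 ≠ y3) :
    loop3 x1 x2 x3 y1 y2 y3 (x2, y2) = -1 := by
  rw [loop3_apply, if_neg (by simp [Prod.ext_iff, hi12, hi13, hi23, hj12, hj13, hj23, hi12.symm, hi13.symm, hi23.symm, hj12.symm, hj13.symm, hj23.symm]), if_neg (by simp [Prod.ext_iff, hi12, hi13, hi23, hj12, hj13, hj23, hi12.symm, hi13.symm, hi23.symm, hj12.symm, hj13.symm, hj23.symm]), if_neg (by simp [Prod.ext_iff, hi12, hi13, hi23, hj12, hj13, hj23, hi12.symm, hi13.symm, hi23.symm, hj12.symm, hj13.symm, hj23.symm]), if_neg (by simp [Prod.ext_iff, hi12, hi13, hi23, hj12, hj13, hj23, hi12.symm, hi13.symm, hi23.symm, hj12.symm, hj13.symm, hj23.symm]), if_pos rfl, if_neg (by simp [Prod.ext_iff, hi12, hi13, hi23, hj12, hj13, hj23, hi12.symm, hi13.symm, hi23.symm, hj12.symm, hj13.symm, 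hj23.symm])]
  ring

theorem loop3_v6 (hi12 : x1 ≠ x2) (hi13 : x1 ≠ x3) (hi23 : x2 ≠ x3)
    (hj12 : y1 ≠ y2) (hj13 : y1 ≠ y3) (hj23 : y2 ≠ y3) :
    loop3 x1 x2 x3 y1 y2 y3 (x3, y3) = -1 := by
  rw [loop3_apply, if_neg (by simp [Prod.ext_iff, hi12, hi13, hi23, hj12, hj13, hj23, hi12.symm, hi13.symm, hi23.symm, hj12.symm, hj13.symm, hj23.symm]), if_neg (by simp [Prod.ext_iff, hi12, hi13, hi23, hj12, hj13, hj23, hi12.symm, hi13.symm, hi23.symm, hj12.symm, hj13.symm, hj23.symm]), if_neg (by simp [Prod.ext_iff, hi12, hi13, hi23, hj12, hj13, hj23, hi12.symm, hi13.symm, hi23.symm, hj12.symm, hj13.symm, hj23.symm]), if_neg (by simp [Prod.ext_iff, hi12, hi13, hi23, hj12, hj13, hj23, hi12.symm, hi13.symm, hi23.symm, hj12.symm, hj13.symm, hj23.symm]), if_neg (by simp [Prod.ext_iff, hi12, hi13, hi23, hj12, hj13, hj23, hi12.symm, hi13.symm, hi23.symm, hj12.symm, hj13.symm, hj23.symm]),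 if_pos rfl]
  ring

end vals

theorem apply_B1_step {I H : ℕ} (M : Set (Fin I × Fin I × Fin H → ℤ)) (hM1 : B1qi I H ⊆ M)
    (u : Fin I × Fin I × Fin H → ℤ) (hu : ∀ p, 0 ≤ u p)
    (m : Fin I × Fin I → ℤ) (ℓ : Fin I → Fin H)
    (hm : IsDf1Loop I m) (hm23 : IsLoopOn I 2 m ∨ IsLoopOn I 3 m)
    (hmdiag : ∀ i, m (i, i) = 0)
    (hmrow : ∀ i, (∑ j, m (i, j)) = 0)
    (hmbound : ∀ p, -1 ≤ m p ∧ m p ≤ 1)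
    (hL : ∀ i j, m (i, j) < 0 → 1 ≤ u (i, j, ℓ i)) :
    ∃ u', StepRel M u u' ∧ (∀ p, 0 ≤ u' p) ∧
      (∀ h, (∑ i, ∑ j, u' (i, j, h)) = ∑ i, ∑ j, u (i, j, h)) ∧
      (∀ i j, (∑ h, u' (i, j, h)) = (∑ h, u (i, j, h)) + m (i, j)) := by
  classical
  set b : Fin I × Fin I × Fin H → ℤ := fun p => if p.2.2 = ℓ p.1 then m (p.1, p.2.1) else 0
    with hbdef
  have hbapp : ∀ i j h, b (i, j, h) = if h = ℓ i then m (i, j) else 0 := fun i j h => rfl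
  have hnn : ∀ p, 0 ≤ u p + b p := by
    intro p
    have hup := hu p
    have hbnd := hmbound (p.1, p.2.1)
    by_cases hc : p.2.2 = ℓ p.1
    · have hbv : b p = m (p.1, p.2.1) := by rw [hbdef]; simp only; rw [if_pos hc]
      rcases lt_or_ge (m (p.1, p.2.1)) 0 with hneg | hpos
      · have h1 := hL p.1 p.2.1 hneg
        rw [← hc] at h1
        have h2 : 1 ≤ u p := h1
        omega
      · omega
    · have hbv : b p = 0 := by rw [hbdef]; simp only; rw [if_neg hc]
      omega
  refine ⟨fun p => u p + b p, ⟨hu, hnn, ?_⟩, hnn, ?_, ?_⟩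
  · have heq : (fun p => u p + b p) - u = b := by funext p; simp
    rw [heq]
    exact hM1 ⟨m, ℓ, hm, hm23, hmdiag, hbdef⟩
  · intro h
    have hin : ∀ i : Fin I, (∑ j, b (i, j, h)) = 0 := by
      intro i
      by_cases hc : h = ℓ i
      · calc (∑ j, b (i, j, h)) = ∑ j, m (i, j) :=
            Finset.sum_congr rfl fun j _ => by rw [hbapp, if_pos hc]
          _ = 0 := hmrow i
      · exact Finset.sum_eq_zero fun j _ => by rw [hbapp, if_neg hc]
    have : (∑ i, ∑ j, (u (i, j, h) + b (i, j, h)))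
        = (∑ i, ((∑ j, u (i, j, h)) + ∑ j, b (i, j, h))) := by
      refine Finset.sum_congr rfl fun i _ => ?_
      rw [Finset.sum_add_distrib]
    rw [this]
    rw [Finset.sum_congr rfl fun i (_ : i ∈ Finset.univ) => by rw [hin i, add_zero]]
  · intro i j
    rw [Finset.sum_add_distrib]
    congr 1
    calc (∑ h, b (i, j, h)) = ∑ h, if h = ℓ i then m (i, j) else 0 :=
        Finset.sum_congr rfl fun h _ => hbapp i j h
      _ = m (i, j) := by rw [Finset.sum_ite_eq' Finset.univ (ℓ i) (fun _ => m (i, j))]; simp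

theorem exists_pos_entry {ι : Type*} [Fintype ι] (g : ι → ℤ) (hpos : 0 < ∑ i, g i) :
    ∃ i, 0 < g i := by
  by_contra hc
  push_neg at hc
  have := Finset.sum_nonpos (s := (Finset.univ : Finset ι)) (fun i _ => hc i)
  omega

theorem step2_lemma {I H : ℕ} (M : Set (Fin I × Fin I × Fin H → ℤ)) (hM1 : B1qi I H ⊆ M)
    (u v : Fin I × Fin I × Fin H → ℤ) (hu : ∀ p, 0 ≤ u p) (hv : ∀ p, 0 ≤ v p)
    (x1 x2 y1 y2 : Fin I)
    (hx : x1 ≠ x2) (hy : y1 ≠ y2)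
    (hx1y1 : x1 ≠ y1) (hx1y2 : x1 ≠ y2) (hx2y1 : x2 ≠ y1) (hx2y2 : x2 ≠ y2)
    (hDp1 : 0 < (∑ h, u (x1, y1, h)) - ∑ h, v (x1, y1, h))
    (hDp2 : 0 < (∑ h, u (x2, y2, h)) - ∑ h, v (x2, y2, h))
    (hDn1 : ((∑ h, u (x1, y2, h)) - ∑ h, v (x1, y2, h)) < 0) :
    ∃ u', StepRel M u u' ∧ (∀ p, 0 ≤ u' p) ∧
      (∀ h, (∑ i, ∑ j, u' (i, j, h)) = ∑ i, ∑ j, u (i, j, h)) ∧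
      (∀ i, (∑ j, ∑ h, u' (i, j, h)) = ∑ j, ∑ h, u (i, j, h)) ∧
      (∀ j, (∑ i, ∑ h, u' (i, j, h)) = ∑ i, ∑ h, u (i, j, h)) ∧
      (∀ i, (∑ h, u' (i, i, h)) = ∑ h, u (i, i, h)) ∧
      (∑ c : Fin I × Fin I, ((∑ h, u' (c.1, c.2, h)) - ∑ h, v (c.1, c.2, h)).natAbs)
        < ∑ c : Fin I × Fin I, ((∑ h, u (c.1, c.2, h)) - ∑ h, v (c.1, c.2, h)).natAbs := by
  classical
  have hs1 : 0 < ∑ h, u (x1, y1, h) := by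
    have hvn : 0 ≤ ∑ h, v (x1, y1, h) := Finset.sum_nonneg fun h _ => hv _
    omega
  obtain ⟨ha1, hha1⟩ := exists_pos_entry (fun h => u (x1, y1, h)) hs1
  have hs2 : 0 < ∑ h, u (x2, y2, h) := by
    have hvn : 0 ≤ ∑ h, v (x2, y2, h) := Finset.sum_nonneg fun h _ => hv _
    omega
  obtain ⟨ha2, hha2⟩ := exists_pos_entry (fun h => u (x2, y2, h)) hs2
  have hL : ∀ i j, loop2 x1 x2 y1 y2 (i, j) < 0 →
      1 ≤ u (i, j, if i = x1 then ha1 else ha2) := by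
    intro i j hneg
    rcases loop2_neg_support hx hy hneg with hE | hE <;>
      (rw [Prod.mk.injEq] at hE; obtain ⟨rfl, rfl⟩ := hE)
    · rw [if_pos rfl]
      simpa [Int.lt_iff_add_one_le] using hha1
    · rw [if_neg hx.symm]
      simpa [Int.lt_iff_add_one_le] using hha2
  obtain ⟨u', hstep, hnn, hlayu, hcellu⟩ := apply_B1_step M hM1 u hu (loop2 x1 x2 y1 y2)
    (fun i => if i = x1 then ha1 else ha2)
    (isDf1_loop2 hx hy) (Or.inl (isLoopOn_loop2 hx hy))
    (loop2_diag hx1y1 hx1y2 hx2y1 hx2y2) (fun i => loop2_row i) (loop2_bound hx hy) hL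
  refine ⟨u', hstep, hnn, hlayu, ?_, ?_, ?_, ?_⟩
  · intro i
    have heq : (∑ j, ∑ h, u' (i, j, h)) = ∑ j, ((∑ h, u (i, j, h)) + loop2 x1 x2 y1 y2 (i, j)) :=
      Finset.sum_congr rfl fun j _ => hcellu i j
    rw [heq, Finset.sum_add_distrib, loop2_row i, add_zero]
  · intro j
    have heq : (∑ i, ∑ h, u' (i, j, h)) = ∑ i, ((∑ h, u (i, j, h)) + loop2 x1 x2 y1 y2 (i, j)) :=
      Finset.sum_congr rfl fun i _ => hcellu i j
    rw [heq, Finset.sum_add_distrib, loop2_col j, add_zero]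
  · intro i
    rw [hcellu i i, loop2_diag hx1y1 hx1y2 hx2y1 hx2y2 i, add_zero]
  · have d12 : ((x1, y2) : Fin I × Fin I) ≠ (x2, y1) := by simp [Prod.ext_iff, hx]
    have d13 : ((x1, y2) : Fin I × Fin I) ≠ (x1, y1) := by simp [Prod.ext_iff, hy.symm]
    have d14 : ((x1, y2) : Fin I × Fin I) ≠ (x2, y2) := by simp [Prod.ext_iff, hx]
    have d23 : ((x2, y1) : Fin I × Fin I) ≠ (x1, y1) := by simp [Prod.ext_iff, hx.symm]
    have d24 : ((x2, y1) : Fin I × Fin I) ≠ (x2, y2) := by simp [Prod.ext_iff, hy]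
    have d34 : ((x1, y1) : Fin I × Fin I) ≠ (x2, y2) := by simp [Prod.ext_iff, hx]
    refine sum_natAbs_lt_aux _ _ {(x1, y2), (x2, y1), (x1, y1), (x2, y2)} ?_ ?_
    · intro c hc
      simp only [Finset.mem_insert, Finset.mem_singleton] at hc
      push_neg at hc
      obtain ⟨e1, e2, e3, e4⟩ := hc
      have hz : loop2 x1 x2 y1 y2 c = 0 := by
        by_contra hzz
        rcases loop2_support hzz with h | h | h | h
        exacts [e1 h, e2 h, e3 h, e4 h]
      have hz' : loop2 x1 x2 y1 y2 (c.1, c.2) = 0 := hz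
      rw [hcellu c.1 c.2, hz', add_zero]
    · rw [sum4 _ _ _ _ _ d12 d13 d14 d23 d24 d34, sum4 _ _ _ _ _ d12 d13 d14 d23 d24 d34]
      dsimp only
      rw [hcellu x1 y2, hcellu x2 y1, hcellu x1 y1, hcellu x2 y2,
        loop2_v1 hx hy, loop2_v2 hx hy, loop2_v3 hx hy, loop2_v4 hx hy]
      omega

theorem step3_lemma {I H : ℕ} (M : Set (Fin I × Fin I × Fin H → ℤ)) (hM1 : B1qi I H ⊆ M)
    (u v : Fin I × Fin I × Fin H → ℤ) (hu : ∀ p, 0 ≤ u p) (hv : ∀ p, 0 ≤ v p)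
    (x1 x2 x3 y1 y2 y3 : Fin I)
    (hx12 : x1 ≠ x2) (hx13 : x1 ≠ x3) (hx23 : x2 ≠ x3)
    (hy12 : y1 ≠ y2) (hy13 : y1 ≠ y3) (hy23 : y2 ≠ y3)
    (hd11 : x1 ≠ y1) (hd12 : x1 ≠ y2) (hd22 : x2 ≠ y2) (hd23 : x2 ≠ y3)
    (hd33 : x3 ≠ y3) (hd31 : x3 ≠ y1)
    (hDp1 : 0 < (∑ h, u (x1, y1, h)) - ∑ h, v (x1, y1, h))
    (hDp2 : 0 < (∑ h, u (x2, y2, h)) - ∑ h, v (x2, y2, h))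
    (hDp3 : 0 < (∑ h, u (x3, y3, h)) - ∑ h, v (x3, y3, h))
    (hDn1 : ((∑ h, u (x1, y2, h)) - ∑ h, v (x1, y2, h)) < 0)
    (hDn2 : ((∑ h, u (x2, y3, h)) - ∑ h, v (x2, y3, h)) < 0) :
    ∃ u', StepRel M u u' ∧ (∀ p, 0 ≤ u' p) ∧
      (∀ h, (∑ i, ∑ j, u' (i, j, h)) = ∑ i, ∑ j, u (i, j, h)) ∧
      (∀ i, (∑ j, ∑ h, u' (i, j, h)) = ∑ j, ∑ h, u (i, j, h)) ∧
      (∀ j, (∑ i, ∑ h, u' (i, j, h)) = ∑ i, ∑ h, u (i, j, h)) ∧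
      (∀ i, (∑ h, u' (i, i, h)) = ∑ h, u (i, i, h)) ∧
      (∑ c : Fin I × Fin I, ((∑ h, u' (c.1, c.2, h)) - ∑ h, v (c.1, c.2, h)).natAbs)
        < ∑ c : Fin I × Fin I, ((∑ h, u (c.1, c.2, h)) - ∑ h, v (c.1, c.2, h)).natAbs := by
  classical
  have hs1 : 0 < ∑ h, u (x1, y1, h) := by
    have hvn : 0 ≤ ∑ h, v (x1, y1, h) := Finset.sum_nonneg fun h _ => hv _
    omega
  obtain ⟨ha1, hha1⟩ := exists_pos_entry (fun h => u (x1, y1, h)) hs1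
  have hs2 : 0 < ∑ h, u (x2, y2, h) := by
    have hvn : 0 ≤ ∑ h, v (x2, y2, h) := Finset.sum_nonneg fun h _ => hv _
    omega
  obtain ⟨ha2, hha2⟩ := exists_pos_entry (fun h => u (x2, y2, h)) hs2
  have hs3 : 0 < ∑ h, u (x3, y3, h) := by
    have hvn : 0 ≤ ∑ h, v (x3, y3, h) := Finset.sum_nonneg fun h _ => hv _
    omega
  obtain ⟨ha3, hha3⟩ := exists_pos_entry (fun h => u (x3, y3, h)) hs3
  have hL : ∀ i j, loop3 x1 x2 x3 y1 y2 y3 (i, j) < 0 →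
      1 ≤ u (i, j, if i = x1 then ha1 else if i = x2 then ha2 else ha3) := by
    intro i j hneg
    rcases loop3_neg_support hx12 hx13 hx23 hy12 hy13 hy23 hneg with hE | hE | hE <;>
      (rw [Prod.mk.injEq] at hE; obtain ⟨rfl, rfl⟩ := hE)
    · rw [if_pos rfl]
      simpa [Int.lt_iff_add_one_le] using hha1
    · rw [if_neg hx12.symm, if_pos rfl]
      simpa [Int.lt_iff_add_one_le] using hha2
    · rw [if_neg hx13.symm, if_neg hx23.symm]
      simpa [Int.lt_iff_add_one_le] using hha3
  obtain ⟨u', hstep, hnn, hlayu, hcellu⟩ := apply_B1_step M hM1 u hu (loop3 x1 x2 x3 y1 y2 y3)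
    (fun i => if i = x1 then ha1 else if i = x2 then ha2 else ha3)
    (isDf1_loop3 hx12 hx13 hx23 hy12 hy13 hy23)
    (Or.inr (isLoopOn_loop3 hx12 hx13 hx23 hy12 hy13 hy23))
    (loop3_diag hd11 hd12 hd22 hd23 hd33 hd31) (fun i => loop3_row i)
    (loop3_bound hx12 hx13 hx23 hy12 hy13 hy23) hL
  refine ⟨u', hstep, hnn, hlayu, ?_, ?_, ?_, ?_⟩
  · intro i
    have heq : (∑ j, ∑ h, u' (i, j, h))
        = ∑ j, ((∑ h, u (i, j, h)) + loop3 x1 x2 x3 y1 y2 y3 (i, j)) :=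
      Finset.sum_congr rfl fun j _ => hcellu i j
    rw [heq, Finset.sum_add_distrib, loop3_row i, add_zero]
  · intro j
    have heq : (∑ i, ∑ h, u' (i, j, h))
        = ∑ i, ((∑ h, u (i, j, h)) + loop3 x1 x2 x3 y1 y2 y3 (i, j)) :=
      Finset.sum_congr rfl fun i _ => hcellu i j
    rw [heq, Finset.sum_add_distrib, loop3_col j, add_zero]
  · intro i
    rw [hcellu i i, loop3_diag hd11 hd12 hd22 hd23 hd33 hd31 i, add_zero]
  · have d12 : ((x1, y2) : Fin I × Fin I) ≠ (x2, y3) := by simp [Prod.ext_iff, hx12]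
    have d13 : ((x1, y2) : Fin I × Fin I) ≠ (x3, y1) := by simp [Prod.ext_iff, hx13]
    have d14 : ((x1, y2) : Fin I × Fin I) ≠ (x1, y1) := by simp [Prod.ext_iff, hy12.symm]
    have d15 : ((x1, y2) : Fin I × Fin I) ≠ (x2, y2) := by simp [Prod.ext_iff, hx12]
    have d16 : ((x1, y2) : Fin I × Fin I) ≠ (x3, y3) := by simp [Prod.ext_iff, hx13]
    have d23 : ((x2, y3) : Fin I × Fin I) ≠ (x3, y1) := by simp [Prod.ext_iff, hx23]
    have d24 : ((x2, y3) : Fin I × Fin I) ≠ (x1, y1) := by simp [Prod.ext_iff, hx12.symm]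
    have d25 : ((x2, y3) : Fin I × Fin I) ≠ (x2, y2) := by simp [Prod.ext_iff, hy23.symm]
    have d26 : ((x2, y3) : Fin I × Fin I) ≠ (x3, y3) := by simp [Prod.ext_iff, hx23]
    have d34 : ((x3, y1) : Fin I × Fin I) ≠ (x1, y1) := by simp [Prod.ext_iff, hx13.symm]
    have d35 : ((x3, y1) : Fin I × Fin I) ≠ (x2, y2) := by simp [Prod.ext_iff, hx23.symm]
    have d36 : ((x3, y1) : Fin I × Fin I) ≠ (x3, y3) := by simp [Prod.ext_iff, hy13]
    have d45 : ((x1, y1) : Fin I × Fin I) ≠ (x2, y2) := by simp [Prod.ext_iff, hx12]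
    have d46 : ((x1, y1) : Fin I × Fin I) ≠ (x3, y3) := by simp [Prod.ext_iff, hx13]
    have d56 : ((x2, y2) : Fin I × Fin I) ≠ (x3, y3) := by simp [Prod.ext_iff, hx23]
    refine sum_natAbs_lt_aux _ _ {(x1, y2), (x2, y3), (x3, y1), (x1, y1), (x2, y2), (x3, y3)} ?_ ?_
    · intro c hc
      simp only [Finset.mem_insert, Finset.mem_singleton] at hc
      push_neg at hc
      obtain ⟨e1, e2, e3, e4, e5, e6⟩ := hc
      have hz : loop3 x1 x2 x3 y1 y2 y3 c = 0 := by
        by_contra hzz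
        rcases loop3_support hzz with h | h | h | h | h | h
        exacts [e1 h, e2 h, e3 h, e4 h, e5 h, e6 h]
      have hz' : loop3 x1 x2 x3 y1 y2 y3 (c.1, c.2) = 0 := hz
      rw [hcellu c.1 c.2, hz', add_zero]
    · rw [sum6 _ _ _ _ _ _ _ d12 d13 d14 d15 d16 d23 d24 d25 d26 d34 d35 d36 d45 d46 d56,
        sum6 _ _ _ _ _ _ _ d12 d13 d14 d15 d16 d23 d24 d25 d26 d34 d35 d36 d45 d46 d56]
      dsimp only
      rw [hcellu x1 y2, hcellu x2 y3, hcellu x3 y1, hcellu x1 y1, hcellu x2 y2, hcellu x3 y3,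
        loop3_v1 hx12 hx13 hx23 hy12 hy13 hy23, loop3_v2 hx12 hx13 hx23 hy12 hy13 hy23,
        loop3_v3 hx12 hx13 hx23 hy12 hy13 hy23, loop3_v4 hx12 hx13 hx23 hy12 hy13 hy23,
        loop3_v5 hx12 hx13 hx23 hy12 hy13 hy23, loop3_v6 hx12 hx13 hx23 hy12 hy13 hy23]
      omega

theorem phase1 {I H : ℕ} (M : Set (Fin I × Fin I × Fin H → ℤ))
    (hM1 : B1qi I H ⊆ M) (hM2 : B2 I H ⊆ M) :
    ∀ n (u v : Fin I × Fin I × Fin H → ℤ),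
      (∀ p, 0 ≤ u p) → (∀ p, 0 ≤ v p) →
      (∀ h, (∑ i, ∑ j, u (i, j, h)) = ∑ i, ∑ j, v (i, j, h)) →
      (∀ i, (∑ j, ∑ h, u (i, j, h)) = ∑ j, ∑ h, v (i, j, h)) →
      (∀ j, (∑ i, ∑ h, u (i, j, h)) = ∑ i, ∑ h, v (i, j, h)) →
      (∀ i, (∑ h, u (i, i, h)) = ∑ h, v (i, i, h)) →
      (∑ c : Fin I × Fin I, ((∑ h, u (c.1, c.2, h)) - ∑ h, v (c.1, c.2, h)).natAbs) ≤ n →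
      Steps M u v := by
  intro n
  induction n with
  | zero =>
    intro u v hu hv hlay hrow hcol hdiag hle
    have hcell : ∀ i j, (∑ h, u (i, j, h)) = ∑ h, v (i, j, h) := by
      intro i j
      have hz : (∑ c : Fin I × Fin I,
          ((∑ h, u (c.1, c.2, h)) - ∑ h, v (c.1, c.2, h)).natAbs) = 0 :=
        le_antisymm hle (Nat.zero_le _)
      have h0 := Finset.sum_eq_zero_iff.mp hz (i, j) (Finset.mem_univ _)
      simp only at h0
      omega
    exact phase2 M hM2 _ u v hu hv hlay hcell (le_refl _)
  | succ n ih =>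
    intro u v hu hv hlay hrow hcol hdiag hle
    by_cases hEq : ∀ i j, (∑ h, u (i, j, h)) = ∑ h, v (i, j, h)
    · exact phase2 M hM2 _ u v hu hv hlay hEq (le_refl _)
    push_neg at hEq
    obtain ⟨i0, j0, hne0⟩ := hEq
    have hrowD : ∀ i, (∑ j, ((∑ h, u (i, j, h)) - ∑ h, v (i, j, h))) = 0 := by
      intro i; rw [Finset.sum_sub_distrib, hrow i, sub_self]
    have hcolD : ∀ j, (∑ i, ((∑ h, u (i, j, h)) - ∑ h, v (i, j, h))) = 0 := by
      intro j; rw [Finset.sum_sub_distrib, hcol j, sub_self]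
    have hdiagD : ∀ i, ((∑ h, u (i, i, h)) - ∑ h, v (i, i, h)) = 0 := by
      intro i; rw [hdiag i, sub_self]
    obtain ⟨j1, hD1⟩ : ∃ j, 0 < (∑ h, u (i0, j, h)) - ∑ h, v (i0, j, h) := by
      rcases lt_or_gt_of_ne (sub_ne_zero_of_ne hne0) with hlt | hgt
      · exact exists_pos_of_sum_zero
          (fun j => (∑ h, u (i0, j, h)) - ∑ h, v (i0, j, h)) (hrowD i0) hlt
      · exact ⟨j0, hgt⟩
    have hne_i1j1 : i0 ≠ j1 := by
      intro hE; rw [hE] at hD1; have := hdiagD j1; omega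
    obtain ⟨j2, hD2⟩ : ∃ j, ((∑ h, u (i0, j, h)) - ∑ h, v (i0, j, h)) < 0 :=
      exists_neg_of_sum_zero
        (fun j => (∑ h, u (i0, j, h)) - ∑ h, v (i0, j, h)) (hrowD i0) hD1
    have hj12 : j1 ≠ j2 := by intro hE; rw [hE] at hD1; omega
    have hne_i1j2 : i0 ≠ j2 := by
      intro hE; rw [hE] at hD2; have := hdiagD j2; omega
    obtain ⟨i2, hD3⟩ : ∃ i, 0 < (∑ h, u (i, j2, h)) - ∑ h, v (i, j2, h) :=
      exists_pos_of_sum_zero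
        (fun i => (∑ h, u (i, j2, h)) - ∑ h, v (i, j2, h)) (hcolD j2) hD2
    have hi12 : i0 ≠ i2 := by intro hE; rw [hE] at hD2; omega
    have hne_i2j2 : i2 ≠ j2 := by
      intro hE; rw [hE] at hD3; have := hdiagD j2; omega
    by_cases hcase : i2 = j1
    · -- i2 coincides with j1 : need degree 3 or the alternate degree 2 loop
      obtain ⟨j3, hD4⟩ : ∃ j, ((∑ h, u (i2, j, h)) - ∑ h, v (i2, j, h)) < 0 :=
        exists_neg_of_sum_zero
          (fun j => (∑ h, u (i2, j, h)) - ∑ h, v (i2, j, h)) (hrowD i2) hD3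
      have hj23 : j2 ≠ j3 := by intro hE; rw [← hE] at hD4; omega
      have hne_i2j3 : i2 ≠ j3 := by
        intro hE; rw [hE] at hD4; have := hdiagD j3; omega
      have hj13 : j1 ≠ j3 := by rw [← hcase]; exact hne_i2j3
      obtain ⟨i3, hD5⟩ : ∃ i, 0 < (∑ h, u (i, j3, h)) - ∑ h, v (i, j3, h) :=
        exists_pos_of_sum_zero
          (fun i => (∑ h, u (i, j3, h)) - ∑ h, v (i, j3, h)) (hcolD j3) hD4
      have hi23 : i2 ≠ i3 := by intro hE; rw [← hE] at hD5; omega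
      have hne_i3j3 : i3 ≠ j3 := by
        intro hE; rw [hE] at hD5; have := hdiagD j3; omega
      by_cases hcase2 : i3 = i0
      · -- degree 2 loop on rows i0, i2 and columns j3, j2
        rw [hcase2] at hD5
        have hne_i1j3 : i0 ≠ j3 := by rw [← hcase2]; exact hne_i3j3
        obtain ⟨u', hstep, hnn, hlay', hrow', hcol', hdiag', hmeas⟩ :=
          step2_lemma M hM1 u v hu hv i0 i2 j3 j2 hi12 (Ne.symm hj23)
            hne_i1j3 hne_i1j2 hne_i2j3 hne_i2j2 hD5 hD3 hD2
        refine Relation.ReflTransGen.head hstep (ih u' v hnn hv ?_ ?_ ?_ ?_ ?_)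
        · intro h; rw [hlay' h, hlay h]
        · intro i; rw [hrow' i, hrow i]
        · intro j; rw [hcol' j, hcol j]
        · intro i; rw [hdiag' i, hdiag i]
        · omega
      · -- degree 3 loop
        have hi13 : i0 ≠ i3 := fun hE => hcase2 hE.symm
        have hne_i1j1 : i0 ≠ j1 := hne_i1j1
        have hne_i3j1 : i3 ≠ j1 := by rw [← hcase]; exact hi23.symm
        obtain ⟨u', hstep, hnn, hlay', hrow', hcol', hdiag', hmeas⟩ :=
          step3_lemma M hM1 u v hu hv i0 i2 i3 j1 j2 j3 hi12 hi13 hi23 hj12 hj13 hj23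
            hne_i1j1 hne_i1j2 hne_i2j2 hne_i2j3 hne_i3j3 hne_i3j1 hD1 hD3 hD5 hD2 hD4
        refine Relation.ReflTransGen.head hstep (ih u' v hnn hv ?_ ?_ ?_ ?_ ?_)
        · intro h; rw [hlay' h, hlay h]
        · intro i; rw [hrow' i, hrow i]
        · intro j; rw [hcol' j, hcol j]
        · intro i; rw [hdiag' i, hdiag i]
        · omega
    · -- plain degree 2 loop on rows i0, i2 and columns j1, j2
      obtain ⟨u', hstep, hnn, hlay', hrow', hcol', hdiag', hmeas⟩ :=
        step2_lemma M hM1 u v hu hv i0 i2 j1 j2 hi12 hj12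
          hne_i1j1 hne_i1j2 hcase hne_i2j2 hD1 hD3 hD2
      refine Relation.ReflTransGen.head hstep (ih u' v hnn hv ?_ ?_ ?_ ?_ ?_)
      · intro h; rw [hlay' h, hlay h]
      · intro i; rw [hrow' i, hrow i]
      · intro j; rw [hcol' j, hcol j]
      · intro i; rw [hdiag' i, hdiag i]
      · omega

/-- `ℳ₀ = 𝓑₁ ∪ 𝓑₂` is a Markov basis for the model `M₀` built on the quasi-independence
model: any two nonnegative integer `I × I × H` tables with equal layer totals and whose
layer-summed tables have equal row sums, equal column sums and equal diagonal entries are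
connected through nonnegative tables by steps in `ℳ₀`. -/
theorem markov_basis_M0_quasi_independence
    (I H : ℕ) (hI : 2 ≤ I) (hH : 2 ≤ H)
    (u v : Fin I × Fin I × Fin H → ℤ)
    (hu : ∀ p, 0 ≤ u p) (hv : ∀ p, 0 ≤ v p)
    (hlayer : ∀ h : Fin H, (∑ i, ∑ j, u (i, j, h)) = ∑ i, ∑ j, v (i, j, h))
    (hrow : ∀ i : Fin I, (∑ j, ∑ h, u (i, j, h)) = ∑ j, ∑ h, v (i, j, h))
    (hcol : ∀ j : Fin I, (∑ i, ∑ h, u (i, j, h)) = ∑ i, ∑ h, v (i, j, h))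
    (hdiag : ∀ i : Fin I, (∑ h, u (i, i, h)) = ∑ h, v (i, i, h)) :
    MarkovConnects (B1qi I H ∪ B2 I H) u v := by
  have hs : Steps (B1qi I H ∪ B2 I H) u v :=
    phase1 _ Set.subset_union_left Set.subset_union_right _ u v hu hv hlayer hrow hcol hdiag
      (le_refl _)
  exact steps_to_mc hu hs
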